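/- arXiv:1710.10986 — 6 statements merged into one kernel-verified Lean document; each statement's English description precedes it below -/
import Mathlib

section
/- Let q, r : ℝ × ℝ → ℂ be smooth functions of (x,t), and set Ψ = q·E + r·Γ, where E is the 2×2 identity matrix and Γ = [[0,0],[1,0]] (so Ψ = [[q,0],[r,q]]). Let Ψ* denote the entrywise complex conjugate [[conj(q),0],[conj(r),conj(q)]]. Then the matrix NLS equation i·∂t Ψ + ∂x² Ψ + 2 Ψ²·Ψ* = 0 holds (as an identity of 2×2 matrix-valued functions) if and only if the pair (q,r) satisfies the Frobenius NLS system: i·∂t q + ∂x² q + 2 q² conj(q) = 0 and i·∂t r + ∂x² r + 2 q² conj(r) + 4 q conj(q) r = 0. -/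
open Complex

/-- Entrywise partial derivative in `x` of a matrix-valued function of `(x,t)`. -/
noncomputable def mDX {m : Type*} (M : ℝ → ℝ → Matrix m m ℂ) : ℝ → ℝ → Matrix m m ℂ :=
  fun x t => Matrix.of fun i j => deriv (fun x' => M x' t i j) x

/-- Entrywise partial derivative in `t` of a matrix-valued function of `(x,t)`. -/
noncomputable def mDT {m : Type*} (M : ℝ → ℝ → Matrix m m ℂ) : ℝ → ℝ → Matrix m m ℂ :=
  fun x t => Matrix.of fun i j => deriv (fun t' => M x t' i j) t

/-- with `Ψ = qE + rΓ = [[q,0],[r,q]]` and `Ψ*` its entrywise conjugate,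
the matrix NLS equation `i Ψ_t + Ψ_xx + 2 Ψ² Ψ* = 0` holds iff `(q,r)` satisfies the
Frobenius NLS system. -/
theorem statement2 (q r : ℝ → ℝ → ℂ)
    (hq : ContDiff ℝ (⊤ : ℕ∞) (fun p : ℝ × ℝ => q p.1 p.2))
    (hr : ContDiff ℝ (⊤ : ℕ∞) (fun p : ℝ × ℝ => r p.1 p.2))
    (Ψ Ψs : ℝ → ℝ → Matrix (Fin 2) (Fin 2) ℂ)
    (hΨ : ∀ x t : ℝ, Ψ x t = q x t • (1 : Matrix (Fin 2) (Fin 2) ℂ) + r x t • !![0, 0; 1, 0])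
    (hΨs : ∀ x t : ℝ, Ψs x t =
      !![(starRingEnd ℂ) (q x t), 0; (starRingEnd ℂ) (r x t), (starRingEnd ℂ) (q x t)]) :
    (∀ x t : ℝ,
        I • mDT Ψ x t + mDX (mDX Ψ) x t + (2 : ℂ) • (Ψ x t * Ψ x t * Ψs x t) = 0)
    ↔ (∀ x t : ℝ,
        (I * deriv (fun t' => q x t') t + deriv (fun x' => deriv (fun x'' => q x'' t) x') x
          + 2 * (q x t) ^ 2 * (starRingEnd ℂ) (q x t) = 0)
        ∧ (I * deriv (fun t' => r x t') t + deriv (fun x' => deriv (fun x'' => r x'' t) x') x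
          + 2 * (q x t) ^ 2 * (starRingEnd ℂ) (r x t)
          + 4 * q x t * (starRingEnd ℂ) (q x t) * r x t = 0)) := by
  have hΨ' : Ψ = fun x t => !![q x t, 0; r x t, q x t] := by
    funext x t
    rw [hΨ]
    ext i j
    fin_cases i <;> fin_cases j <;> simp [Matrix.one_apply]
  have hΨs' : Ψs = fun x t =>
      !![(starRingEnd ℂ) (q x t), 0; (starRingEnd ℂ) (r x t), (starRingEnd ℂ) (q x t)] := by
    funext x t; exact hΨs x t
  subst hΨ' hΨs'
  constructor
  · intro h x t
    have H := h x t
    rw [← Matrix.ext_iff] at H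
    have h00 := H 0 0
    have h10 := H 1 0
    simp [mDT, mDX, Matrix.mul_apply, Fin.sum_univ_two, Matrix.add_apply,
      Matrix.smul_apply] at h00 h10
    constructor
    · linear_combination h00
    · linear_combination h10
  · intro h x t
    have h1 := (h x t).1
    have h2 := (h x t).2
    ext i j
    fin_cases i <;> fin_cases j <;>
      simp [mDT, mDX, Matrix.mul_apply, Fin.sum_univ_two, Matrix.add_apply,
        Matrix.smul_apply] <;>
      first | linear_combination h1 | linear_combination h2
end

section
/- Let q, r : ℝ × ℝ → ℂ be smooth functions of (x,t). For λ ∈ ℂ define the 4×4 block matrices F(λ) = [[−iλE, qE + rΓ],[−conj(q)E − conj(r)Γ, iλE]] and G(λ) = [[(−2iλ² + i q conj(q))E + i(conj(q) r + q conj(r))Γ, (2qλ + i ∂x q)E + (2rλ + i ∂x r)Γ],[(−2 conj(q) λ + i ∂x conj(q))E + (−2 conj(r) λ + i ∂x conj(r))Γ, (2iλ² − i q conj(q))E − i(conj(q) r + q conj(r))Γ]], where E is the 2×2 identity matrix and Γ = [[0,0],[1,0]]. Then the zero-curvature equation ∂t F(λ) − ∂x G(λ) + F(λ)G(λ) − G(λ)F(λ)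 = 0 holds for all λ ∈ ℂ and all (x,t) if and only if (q,r) satisfies the Frobenius NLS system. -/
open Complex

/-- Partial derivative in `x` of a function of `(x,t)`. -/
noncomputable def pX (f : ℝ → ℝ → ℂ) : ℝ → ℝ → ℂ := fun x t => deriv (fun x' => f x' t) x

/-- The 2×2 identity matrix `E`. -/
def matE : Matrix (Fin 2) (Fin 2) ℂ := 1

/-- The nilpotent matrix `Γ = [[0,0],[1,0]]`. -/
def matΓ : Matrix (Fin 2) (Fin 2) ℂ := !![0, 0; 1, 0]

/-- `a • E + b • Γ`, the generic element of the commutative algebra spanned by `E` and `Γ`. -/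
noncomputable def EG (a b : ℂ) : Matrix (Fin 2) (Fin 2) ℂ := a • matE + b • matΓ

lemma EG_add (a b c d : ℂ) : EG a b + EG c d = EG (a+c) (b+d) := by
  simp [EG, add_smul]; abel

lemma EG_neg (a b : ℂ) : -EG a b = EG (-a) (-b) := by
  simp [EG, neg_smul]; abel

lemma EG_mul (a b c d : ℂ) : EG a b * EG c d = EG (a*c) (a*d+b*c) := by
  ext i j
  fin_cases i <;> fin_cases j <;>
    simp [EG, matE, matΓ, Matrix.mul_apply, Fin.sum_univ_two, Matrix.one_apply] <;> ring

lemma EG_zero : EG 0 0 = 0 := by simp [EG]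

lemma EG_congr {a b c d : ℂ} (h1 : a = c) (h2 : b = d) : EG a b = EG c d := by rw [h1, h2]

lemma EG00 (a b : ℂ) : EG a b 0 0 = a := by simp [EG, matE, matΓ, Matrix.one_apply]

lemma EG10 (a b : ℂ) : EG a b 1 0 = b := by simp [EG, matE, matΓ, Matrix.one_apply]

lemma mDT_fromBlocks (A B C D : ℝ → ℝ → Matrix (Fin 2) (Fin 2) ℂ) (x t : ℝ) :
    mDT (fun x t => Matrix.fromBlocks (A x t) (B x t) (C x t) (D x t)) x t =
      Matrix.fromBlocks (mDT A x t) (mDT B x t) (mDT C x t) (mDT D x t) := by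
  ext (i|i) (j|j) <;> rfl

lemma mDX_fromBlocks (A B C D : ℝ → ℝ → Matrix (Fin 2) (Fin 2) ℂ) (x t : ℝ) :
    mDX (fun x t => Matrix.fromBlocks (A x t) (B x t) (C x t) (D x t)) x t =
      Matrix.fromBlocks (mDX A x t) (mDX B x t) (mDX C x t) (mDX D x t) := by
  ext (i|i) (j|j) <;> rfl

lemma mDT_EG (f g : ℝ → ℝ → ℂ) (x t : ℝ) (f' g' : ℂ)
    (hf : HasDerivAt (fun t' => f x t') f' t) (hg : HasDerivAt (fun t' => g x t') g' t) :
    mDT (fun a b => EG (f a b) (g a b)) x t = EG f' g' := by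
  ext i j
  show deriv (fun t' => EG (f x t') (g x t') i j) t = EG f' g' i j
  have h : (fun t' => EG (f x t') (g x t') i j)
      = fun t' => f x t' * matE i j + g x t' * matΓ i j := by
    funext s; simp [EG, Matrix.add_apply, Matrix.smul_apply, smul_eq_mul]
  rw [h, show deriv (fun t' => f x t' * matE i j + g x t' * matΓ i j) t = f' * matE i j + g' * matΓ i j from
    ((hf.mul_const (matE i j)).add (hg.mul_const (matΓ i j))).deriv]
  simp [EG, Matrix.add_apply, Matrix.smul_apply, smul_eq_mul]

lemma mDX_EG (f g : ℝ → ℝ → ℂ) (x t : ℝ) (f' g' : ℂ)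
    (hf : HasDerivAt (fun x' => f x' t) f' x) (hg : HasDerivAt (fun x' => g x' t) g' x) :
    mDX (fun a b => EG (f a b) (g a b)) x t = EG f' g' := by
  ext i j
  show deriv (fun x' => EG (f x' t) (g x' t) i j) x = EG f' g' i j
  have h : (fun x' => EG (f x' t) (g x' t) i j)
      = fun x' => f x' t * matE i j + g x' t * matΓ i j := by
    funext s; simp [EG, Matrix.add_apply, Matrix.smul_apply, smul_eq_mul]
  rw [h, show deriv (fun x' => f x' t * matE i j + g x' t * matΓ i j) x = f' * matE i j + g' * matΓ i j from
    ((hf.mul_const (matE i j)).add (hg.mul_const (matΓ i j))).deriv]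
  simp [EG, Matrix.add_apply, Matrix.smul_apply, smul_eq_mul]

lemma HasDerivAt.congr_val {f : ℝ → ℂ} {a b : ℂ} {x : ℝ} (h : HasDerivAt f a x)
    (hab : a = b) : HasDerivAt f b x := hab ▸ h

lemma star_I' : (star I : ℂ) = -I := by rw [← starRingEnd_apply]; exact Complex.conj_I

/-- the zero-curvature equation for the 4×4 Lax pair `(F(λ), G(λ))` of the
Frobenius NLS equation holds for all `λ ∈ ℂ` and all `(x,t)` iff `(q,r)` satisfies the
Frobenius NLS system. -/
theorem statement3 (q r : ℝ → ℝ → ℂ)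
    (hq : ContDiff ℝ (⊤ : ℕ∞) (fun p : ℝ × ℝ => q p.1 p.2))
    (hr : ContDiff ℝ (⊤ : ℕ∞) (fun p : ℝ × ℝ => r p.1 p.2))
    (F G : ℂ → ℝ → ℝ → Matrix (Fin 2 ⊕ Fin 2) (Fin 2 ⊕ Fin 2) ℂ)
    (hF : ∀ (l : ℂ) (x t : ℝ), F l x t = Matrix.fromBlocks
      ((-I * l) • matE)
      (q x t • matE + r x t • matΓ)
      ((-(starRingEnd ℂ) (q x t)) • matE + (-(starRingEnd ℂ) (r x t)) • matΓ)
      ((I * l) • matE))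
    (hG : ∀ (l : ℂ) (x t : ℝ), G l x t = Matrix.fromBlocks
      ((-2 * I * l ^ 2 + I * q x t * (starRingEnd ℂ) (q x t)) • matE
        + (I * ((starRingEnd ℂ) (q x t) * r x t + q x t * (starRingEnd ℂ) (r x t))) • matΓ)
      ((2 * q x t * l + I * pX q x t) • matE + (2 * r x t * l + I * pX r x t) • matΓ)
      ((-2 * (starRingEnd ℂ) (q x t) * l
          + I * pX (fun x' t' => (starRingEnd ℂ) (q x' t')) x t) • matE
        + (-2 * (starRingEnd ℂ) (r x t) * l
          + I * pX (fun x' t' => (starRingEnd ℂ) (r x' t')) x t) • matΓ)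
      ((2 * I * l ^ 2 - I * q x t * (starRingEnd ℂ) (q x t)) • matE
        + (-(I * ((starRingEnd ℂ) (q x t) * r x t + q x t * (starRingEnd ℂ) (r x t)))) • matΓ)) :
    (∀ (l : ℂ) (x t : ℝ),
        mDT (F l) x t - mDX (G l) x t + (F l x t * G l x t - G l x t * F l x t) = 0)
    ↔ (∀ x t : ℝ,
        (I * deriv (fun t' => q x t') t + pX (pX q) x t
          + 2 * (q x t) ^ 2 * (starRingEnd ℂ) (q x t) = 0)
        ∧ (I * deriv (fun t' => r x t') t + pX (pX r) x t
          + 2 * (q x t) ^ 2 * (starRingEnd ℂ) (r x t)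
          + 4 * q x t * (starRingEnd ℂ) (q x t) * r x t = 0)) := by
  -- differentiability facts
  have hqxc : ∀ t : ℝ, ContDiff ℝ (⊤ : ℕ∞) (fun x => q x t) :=
    fun t => hq.comp (contDiff_id.prodMk contDiff_const)
  have hrxc : ∀ t : ℝ, ContDiff ℝ (⊤ : ℕ∞) (fun x => r x t) :=
    fun t => hr.comp (contDiff_id.prodMk contDiff_const)
  have hqxd : ∀ t : ℝ, Differentiable ℝ (fun x => q x t) :=
    fun t => (hqxc t).differentiable (by simp)
  have hrxd : ∀ t : ℝ, Differentiable ℝ (fun x => r x t) :=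
    fun t => (hrxc t).differentiable (by simp)
  have hqxd2 : ∀ t : ℝ, Differentiable ℝ (deriv (fun x => q x t)) :=
    fun t => (contDiff_infty_iff_deriv.mp (hqxc t)).2.differentiable (by simp)
  have hrxd2 : ∀ t : ℝ, Differentiable ℝ (deriv (fun x => r x t)) :=
    fun t => (contDiff_infty_iff_deriv.mp (hrxc t)).2.differentiable (by simp)
  have hqtd : ∀ x : ℝ, Differentiable ℝ (fun t => q x t) :=
    fun x => ((hq.comp (contDiff_const.prodMk contDiff_id)).differentiable (by simp))
  have hrtd : ∀ x : ℝ, Differentiable ℝ (fun t => r x t) :=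
    fun x => ((hr.comp (contDiff_const.prodMk contDiff_id)).differentiable (by simp))
  have hpXconjq : ∀ (a b : ℝ),
      pX (fun x' t' => (starRingEnd ℂ) (q x' t')) a b = star (pX q a b) := by
    intro a b
    show deriv (fun x' => (starRingEnd ℂ) (q x' b)) a = _
    have h1 : (fun x' => (starRingEnd ℂ) (q x' b)) = fun x' => star (q x' b) := by
      funext y; rw [starRingEnd_apply]
    rw [h1]
    exact ((hqxd b a).hasDerivAt.star).deriv
  have hpXconjr : ∀ (a b : ℝ),
      pX (fun x' t' => (starRingEnd ℂ) (r x' t')) a b = star (pX r a b) := by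
    intro a b
    show deriv (fun x' => (starRingEnd ℂ) (r x' b)) a = _
    have h1 : (fun x' => (starRingEnd ℂ) (r x' b)) = fun x' => star (r x' b) := by
      funext y; rw [starRingEnd_apply]
    rw [h1]
    exact ((hrxd b a).hasDerivAt.star).deriv
  -- the key computation
  have key : ∀ (l : ℂ) (x t : ℝ),
      mDT (F l) x t - mDX (G l) x t + (F l x t * G l x t - G l x t * F l x t) =
      Matrix.fromBlocks (EG 0 0)
        (EG (deriv (fun t' => q x t') t - I * pX (pX q) x t - 2*I*(q x t)^2*star (q x t))
            (deriv (fun t' => r x t') t - I * pX (pX r) x t - 4*I*(q x t)*star (q x t)*(r x t)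
              - 2*I*(q x t)^2*star (r x t)))
        (EG (-star (deriv (fun t' => q x t') t) - I * star (pX (pX q) x t)
              - 2*I*(q x t)*(star (q x t))^2)
            (-star (deriv (fun t' => r x t') t) - I * star (pX (pX r) x t)
              - 4*I*(q x t)*star (q x t)*star (r x t) - 2*I*(star (q x t))^2*(r x t)))
        (EG 0 0) := by
    intro l x t
    have Hq1 : HasDerivAt (fun x' => q x' t) (pX q x t) x := (hqxd t x).hasDerivAt
    have Hr1 : HasDerivAt (fun x' => r x' t) (pX r x t) x := (hrxd t x).hasDerivAt
    have Hq2 : HasDerivAt (fun x' => pX q x' t) (pX (pX q) x t) x := (hqxd2 t x).hasDerivAt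
    have Hr2 : HasDerivAt (fun x' => pX r x' t) (pX (pX r) x t) x := (hrxd2 t x).hasDerivAt
    have HqT : HasDerivAt (fun t' => q x t') (deriv (fun t' => q x t') t) t :=
      (hqtd x t).hasDerivAt
    have HrT : HasDerivAt (fun t' => r x t') (deriv (fun t' => r x t') t) t :=
      (hrtd x t).hasDerivAt
    have hFfun : F l = fun a b => Matrix.fromBlocks (EG (-I*l) 0) (EG (q a b) (r a b))
        (EG (-star (q a b)) (-star (r a b))) (EG (I*l) 0) := by
      funext a b
      rw [hF l a b]
      simp only [EG, starRingEnd_apply, zero_smul, add_zero]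
    have hGfun : G l = fun a b => Matrix.fromBlocks
        (EG (-2*I*l^2 + I*q a b*star (q a b)) (I*(star (q a b)*r a b + q a b*star (r a b))))
        (EG (2*q a b*l + I*pX q a b) (2*r a b*l + I*pX r a b))
        (EG (-2*star (q a b)*l + I*star (pX q a b)) (-2*star (r a b)*l + I*star (pX r a b)))
        (EG (2*I*l^2 - I*q a b*star (q a b))
            (-(I*(star (q a b)*r a b + q a b*star (r a b))))) := by
      funext a b
      rw [hG l a b, hpXconjq a b, hpXconjr a b]
      simp only [EG, starRingEnd_apply]
    have hFp : F l x t = Matrix.fromBlocks (EG (-I*l) 0) (EG (q x t) (r x t))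
        (EG (-star (q x t)) (-star (r x t))) (EG (I*l) 0) := by rw [hFfun]
    have hGp : G l x t = Matrix.fromBlocks
        (EG (-2*I*l^2 + I*q x t*star (q x t)) (I*(star (q x t)*r x t + q x t*star (r x t))))
        (EG (2*q x t*l + I*pX q x t) (2*r x t*l + I*pX r x t))
        (EG (-2*star (q x t)*l + I*star (pX q x t)) (-2*star (r x t)*l + I*star (pX r x t)))
        (EG (2*I*l^2 - I*q x t*star (q x t))
            (-(I*(star (q x t)*r x t + q x t*star (r x t))))) := by rw [hGfun]
    have T11 : mDT (fun a b => EG (-I*l) 0) x t = EG 0 0 :=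
      mDT_EG _ _ x t _ _ (hasDerivAt_const t _) (hasDerivAt_const t _)
    have T22 : mDT (fun a b => EG (I*l) 0) x t = EG 0 0 :=
      mDT_EG _ _ x t _ _ (hasDerivAt_const t _) (hasDerivAt_const t _)
    have T12 : mDT (fun a b => EG (q a b) (r a b)) x t =
        EG (deriv (fun t' => q x t') t) (deriv (fun t' => r x t') t) :=
      mDT_EG _ _ x t _ _ HqT HrT
    have T21 : mDT (fun a b => EG (-star (q a b)) (-star (r a b))) x t =
        EG (-star (deriv (fun t' => q x t') t)) (-star (deriv (fun t' => r x t') t)) :=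
      mDT_EG _ _ x t _ _ (HqT.star.neg) (HrT.star.neg)
    have hDT : mDT (F l) x t = Matrix.fromBlocks (EG 0 0)
        (EG (deriv (fun t' => q x t') t) (deriv (fun t' => r x t') t))
        (EG (-star (deriv (fun t' => q x t') t)) (-star (deriv (fun t' => r x t') t)))
        (EG 0 0) := by
      rw [hFfun, mDT_fromBlocks, T11, T12, T21, T22]
    have X11 : mDX (fun a b => EG (-2*I*l^2 + I*q a b*star (q a b))
        (I*(star (q a b)*r a b + q a b*star (r a b)))) x t =
        EG (I*pX q x t*star (q x t) + I*q x t*star (pX q x t))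
           (I*(star (pX q x t)*r x t + star (q x t)*pX r x t + pX q x t*star (r x t)
              + q x t*star (pX r x t))) := by
      apply mDX_EG
      · exact ((hasDerivAt_const x (-2*I*l^2)).add
          ((Hq1.const_mul I).mul Hq1.star)).congr_val (by ring)
      · exact (((Hq1.star.mul Hr1).add (Hq1.mul Hr1.star)).const_mul I).congr_val (by ring)
    have X12 : mDX (fun a b => EG (2*q a b*l + I*pX q a b) (2*r a b*l + I*pX r a b)) x t =
        EG (2*pX q x t*l + I*pX (pX q) x t) (2*pX r x t*l + I*pX (pX r) x t) := by
      apply mDX_EG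
      · exact (((Hq1.const_mul 2).mul_const l).add (Hq2.const_mul I)).congr_val (by ring)
      · exact (((Hr1.const_mul 2).mul_const l).add (Hr2.const_mul I)).congr_val (by ring)
    have X21 : mDX (fun a b => EG (-2*star (q a b)*l + I*star (pX q a b))
        (-2*star (r a b)*l + I*star (pX r a b))) x t =
        EG (-2*star (pX q x t)*l + I*star (pX (pX q) x t))
           (-2*star (pX r x t)*l + I*star (pX (pX r) x t)) := by
      apply mDX_EG
      · exact (((Hq1.star.const_mul (-2)).mul_const l).add
          (Hq2.star.const_mul I)).congr_val (by ring)
      · exact (((Hr1.star.const_mul (-2)).mul_const l).add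
          (Hr2.star.const_mul I)).congr_val (by ring)
    have X22 : mDX (fun a b => EG (2*I*l^2 - I*q a b*star (q a b))
        (-(I*(star (q a b)*r a b + q a b*star (r a b))))) x t =
        EG (-(I*pX q x t*star (q x t) + I*q x t*star (pX q x t)))
           (-(I*(star (pX q x t)*r x t + star (q x t)*pX r x t + pX q x t*star (r x t)
              + q x t*star (pX r x t)))) := by
      apply mDX_EG
      · exact ((hasDerivAt_const x (2*I*l^2)).sub
          ((Hq1.const_mul I).mul Hq1.star)).congr_val (by ring)
      · exact ((((Hq1.star.mul Hr1).add (Hq1.mul Hr1.star)).const_mul I).neg).congr_val (by ring)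
    have hDX : mDX (G l) x t = Matrix.fromBlocks
        (EG (I*pX q x t*star (q x t) + I*q x t*star (pX q x t))
           (I*(star (pX q x t)*r x t + star (q x t)*pX r x t + pX q x t*star (r x t)
              + q x t*star (pX r x t))))
        (EG (2*pX q x t*l + I*pX (pX q) x t) (2*pX r x t*l + I*pX (pX r) x t))
        (EG (-2*star (pX q x t)*l + I*star (pX (pX q) x t))
           (-2*star (pX r x t)*l + I*star (pX (pX r) x t)))
        (EG (-(I*pX q x t*star (q x t) + I*q x t*star (pX q x t)))
           (-(I*(star (pX q x t)*r x t + star (q x t)*pX r x t + pX q x t*star (r x t)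
              + q x t*star (pX r x t))))) := by
      rw [hGfun, mDX_fromBlocks, X11, X12, X21, X22]
    rw [hDT, hDX, hFp, hGp]
    simp only [Matrix.fromBlocks_multiply, EG_mul, EG_add, sub_eq_add_neg,
      Matrix.fromBlocks_neg, EG_neg, Matrix.fromBlocks_add]
    refine Matrix.fromBlocks_inj.mpr ⟨EG_congr ?_ ?_, EG_congr ?_ ?_, EG_congr ?_ ?_,
      EG_congr ?_ ?_⟩ <;>
      first
        | ring1
        | (ring_nf; simp only [Complex.I_sq]; ring)
  constructor
  · intro h x t
    have h0 := (key 0 x t).symm.trans (h 0 x t)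
    have e1 := congrFun (congrFun h0 (Sum.inl 0)) (Sum.inr 0)
    have e2 := congrFun (congrFun h0 (Sum.inl 1)) (Sum.inr 0)
    rw [Matrix.fromBlocks_apply₁₂] at e1 e2
    rw [EG00] at e1
    rw [EG10] at e2
    simp only [Matrix.zero_apply] at e1 e2
    constructor
    · simp only [starRingEnd_apply]
      linear_combination I * e1 + (pX (pX q) x t + 2*(q x t)^2*star (q x t)) * Complex.I_sq
    · simp only [starRingEnd_apply]
      linear_combination I * e2 + (pX (pX r) x t + 2*(q x t)^2*star (r x t) + 4*q x t*star (q x t)*r x t) * Complex.I_sq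
  · intro h l x t
    obtain ⟨h1, h2⟩ := h x t
    simp only [starRingEnd_apply] at h1 h2
    have h1s := congrArg star h1
    have h2s := congrArg star h2
    simp only [star_add, star_mul', star_pow, star_zero, star_ofNat, star_star, star_I'] at h1s h2s
    rw [key l x t]
    have z1 : deriv (fun t' => q x t') t - I * pX (pX q) x t - 2*I*(q x t)^2*star (q x t) = 0 := by
      linear_combination (-I) * h1 + (deriv (fun t' => q x t') t) * Complex.I_sq
    have z2 : deriv (fun t' => r x t') t - I * pX (pX r) x t - 4*I*(q x t)*star (q x t)*(r x t)
        - 2*I*(q x t)^2*star (r x t) = 0 := by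
      linear_combination (-I) * h2 + (deriv (fun t' => r x t') t) * Complex.I_sq
    have z3 : -star (deriv (fun t' => q x t') t) - I * star (pX (pX q) x t)
        - 2*I*(q x t)*(star (q x t))^2 = 0 := by
      linear_combination (-I) * h1s + (-star (deriv (fun t' => q x t') t)) * Complex.I_sq
    have z4 : -star (deriv (fun t' => r x t') t) - I * star (pX (pX r) x t)
        - 4*I*(q x t)*star (q x t)*star (r x t) - 2*I*(star (q x t))^2*(r x t) = 0 := by
      linear_combination (-I) * h2s + (-star (deriv (fun t' => r x t') t)) * Complex.I_sq
    rw [z1, z2, z3, z4, EG_zero, Matrix.fromBlocks_zero]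
end

section
/- Let q, r : ℝ × ℝ → ℂ be smooth, let λ₁ ∈ ℂ, and suppose (φ110, φ111, φ120, φ121) is a solution of the Lax system of the Frobenius NLS equation at spectral parameter λ₁ for potentials (q,r). Then the quadruple (φ210, φ211, φ220, φ221) := (−conj(φ120), −conj(φ121), conj(φ110), conj(φ111)) is a solution of the same Lax system at spectral parameter λ₂ = conj(λ₁). -/
open Complex

/-- Partial derivative in `t` of a function of `(x,t)`. -/
noncomputable def pT (f : ℝ → ℝ → ℂ) : ℝ → ℝ → ℂ := fun x t => deriv (fun t' => f x t') t

/-- The Lax system of the Frobenius NLS equation at spectral parameter `lam` for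
potentials `(q, r)`, for the quadruple of functions `(p110, p111, p120, p121)` of `(x,t)`. -/
def FrobeniusLaxSolution (q r : ℝ → ℝ → ℂ) (lam : ℂ)
    (p110 p111 p120 p121 : ℝ → ℝ → ℂ) : Prop :=
  ∀ x t : ℝ,
    pX p110 x t = -I * lam * p110 x t + q x t * p120 x t ∧
    pX p111 x t = -I * lam * p111 x t + q x t * p121 x t + r x t * p120 x t ∧
    pX p120 x t = I * lam * p120 x t - (starRingEnd ℂ) (q x t) * p110 x t ∧
    pX p121 x t = I * lam * p121 x t - (starRingEnd ℂ) (q x t) * p111 x t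
      - (starRingEnd ℂ) (r x t) * p110 x t ∧
    pT p110 x t = (-2 * I * lam ^ 2 + I * q x t * (starRingEnd ℂ) (q x t)) * p110 x t
      + (2 * q x t * lam + I * pX q x t) * p120 x t ∧
    pT p111 x t = (-2 * I * lam ^ 2 + I * q x t * (starRingEnd ℂ) (q x t)) * p111 x t
      + I * ((starRingEnd ℂ) (q x t) * r x t + q x t * (starRingEnd ℂ) (r x t)) * p110 x t
      + (2 * q x t * lam + I * pX q x t) * p121 x t
      + (2 * r x t * lam + I * pX r x t) * p120 x t ∧
    pT p120 x t = (-2 * (starRingEnd ℂ) (q x t) * lam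
        + I * pX (fun x' t' => (starRingEnd ℂ) (q x' t')) x t) * p110 x t
      + (2 * I * lam ^ 2 - I * q x t * (starRingEnd ℂ) (q x t)) * p120 x t ∧
    pT p121 x t = (-2 * (starRingEnd ℂ) (q x t) * lam
        + I * pX (fun x' t' => (starRingEnd ℂ) (q x' t')) x t) * p111 x t
      + (-2 * (starRingEnd ℂ) (r x t) * lam
        + I * pX (fun x' t' => (starRingEnd ℂ) (r x' t')) x t) * p110 x t
      + (2 * I * lam ^ 2 - I * q x t * (starRingEnd ℂ) (q x t)) * p121 x t
      - I * ((starRingEnd ℂ) (q x t) * r x t + q x t * (starRingEnd ℂ) (r x t)) * p120 x t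


lemma pX_conj (f : ℝ → ℝ → ℂ) (x t : ℝ) :
    pX (fun x' t' => (starRingEnd ℂ) (f x' t')) x t = (starRingEnd ℂ) (pX f x t) :=
  deriv.star

lemma pT_conj (f : ℝ → ℝ → ℂ) (x t : ℝ) :
    pT (fun x' t' => (starRingEnd ℂ) (f x' t')) x t = (starRingEnd ℂ) (pT f x t) :=
  deriv.star

lemma pX_negconj (f : ℝ → ℝ → ℂ) (x t : ℝ) :
    pX (fun x' t' => -(starRingEnd ℂ) (f x' t')) x t = -(starRingEnd ℂ) (pX f x t) := by
  have : pX (fun x' t' => -(starRingEnd ℂ) (f x' t')) x t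
      = deriv (fun y => -((starRingEnd ℂ) (f y t))) x := rfl
  rw [this, deriv.fun_neg]
  exact congrArg Neg.neg (deriv.star)

lemma pT_negconj (f : ℝ → ℝ → ℂ) (x t : ℝ) :
    pT (fun x' t' => -(starRingEnd ℂ) (f x' t')) x t = -(starRingEnd ℂ) (pT f x t) := by
  have : pT (fun x' t' => -(starRingEnd ℂ) (f x' t')) x t
      = deriv (fun y => -((starRingEnd ℂ) (f x y))) t := rfl
  rw [this, deriv.fun_neg]
  exact congrArg Neg.neg (deriv.star)

/-- if `(φ110, φ111, φ120, φ121)` solves the Lax system of the Frobenius NLS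
equation at `λ₁`, then `(−conj φ120, −conj φ121, conj φ110, conj φ111)` solves the same Lax
system at `λ₂ = conj λ₁`. -/
theorem statement4 (q r : ℝ → ℝ → ℂ)
    (hq : ContDiff ℝ (⊤ : ℕ∞) (fun p : ℝ × ℝ => q p.1 p.2))
    (hr : ContDiff ℝ (⊤ : ℕ∞) (fun p : ℝ × ℝ => r p.1 p.2))
    (lam1 : ℂ) (p110 p111 p120 p121 : ℝ → ℝ → ℂ)
    (h : FrobeniusLaxSolution q r lam1 p110 p111 p120 p121) :
    FrobeniusLaxSolution q r ((starRingEnd ℂ) lam1)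
      (fun x t => -(starRingEnd ℂ) (p120 x t))
      (fun x t => -(starRingEnd ℂ) (p121 x t))
      (fun x t => (starRingEnd ℂ) (p110 x t))
      (fun x t => (starRingEnd ℂ) (p111 x t)) := by
  intro x t
  obtain ⟨h1, h2, h3, h4, h5, h6, h7, h8⟩ := h x t
  refine ⟨?_, ?_, ?_, ?_, ?_, ?_, ?_, ?_⟩ <;>
    simp only [pX_conj, pX_negconj, pT_conj, pT_negconj, h1, h2, h3, h4, h5, h6, h7, h8,
      map_add, map_sub, map_mul, map_neg, map_pow, map_ofNat, Complex.conj_I,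
      Complex.conj_conj] <;> ring
end

section
/- Let q, r, q¹, r¹ : ℝ × ℝ → ℂ be smooth, and let T(λ) = T₁·λ + T₀ where T₁ = [[a10·E + a11·Γ, b10·E + b11·Γ],[c10·E + c11·Γ, d10·E + d11·Γ]] and T₀ = [[a₀·E + a₁·Γ, b₀·E + b₁·Γ],[c₀·E + c₁·Γ, d₀·E + d₁·Γ]] are 4×4 block matrices whose coefficient functions depend on (x,t), with E the 2×2 identity and Γ = [[0,0],[1,0]]. Let F(λ) and F¹(λ) denote the spatial Lax matrices [[−iλE, qE + rΓ],[−conj(q)E − conj(r)Γ, iλE]] built from (q,r) and from (q¹,r¹), respectively. If ∂x T(λ) + T(λ)·F(λ) = F¹(λ)·T(λ) holds for all λ ∈ ℂ and all (x,t), then: b10 = b11 = c10 = c11 = 0; the functions a10, a11, d10, d11 are independent of x (∂x a10 = ∂x a11 = ∂x d10 = ∂x d11 = 0); and moreover −2i·b₀ + q¹·d10 − q·a10 = 0 and −2i·b₁ + r¹·d10 + q¹·d11 − q·a11 − r·a10 = 0. -/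
open Complex

lemma aux_block (a b : ℂ) : a • matE + b • matΓ = !![a, 0; b, a] := by
  rw [matE, matΓ]
  ext i j
  fin_cases i <;> fin_cases j <;> simp [Matrix.one_apply]

lemma aux_smulE (c : ℂ) : c • matE = !![c, 0; 0, c] := by
  rw [matE]
  ext i j
  fin_cases i <;> fin_cases j <;> simp [Matrix.one_apply]

/-- the intertwining relation `∂x T(λ) + T(λ)F(λ) = F¹(λ)T(λ)` for all `λ`
forces `b10 = b11 = c10 = c11 = 0`, that `a10, a11, d10, d11` are independent of `x`, and
the relations `−2i b₀ + q¹ d10 − q a10 = 0` and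
`−2i b₁ + r¹ d10 + q¹ d11 − q a11 − r a10 = 0`. -/
theorem statement7 (q r q1 r1 : ℝ → ℝ → ℂ)
    (hq : ContDiff ℝ (⊤ : ℕ∞) (fun p : ℝ × ℝ => q p.1 p.2))
    (hr : ContDiff ℝ (⊤ : ℕ∞) (fun p : ℝ × ℝ => r p.1 p.2))
    (hq1 : ContDiff ℝ (⊤ : ℕ∞) (fun p : ℝ × ℝ => q1 p.1 p.2))
    (hr1 : ContDiff ℝ (⊤ : ℕ∞) (fun p : ℝ × ℝ => r1 p.1 p.2))
    (a10 a11 b10 b11 c10 c11 d10 d11 a0 a1 b0 b1 c0 c1 d0 d1 : ℝ → ℝ → ℂ)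
    (hdiff : ∀ f ∈ ([a10, a11, b10, b11, c10, c11, d10, d11,
                     a0, a1, b0, b1, c0, c1, d0, d1] : List (ℝ → ℝ → ℂ)),
      Differentiable ℝ (fun p : ℝ × ℝ => f p.1 p.2))
    (T1 T0 : ℝ → ℝ → Matrix (Fin 2 ⊕ Fin 2) (Fin 2 ⊕ Fin 2) ℂ)
    (hT1 : ∀ x t : ℝ, T1 x t = Matrix.fromBlocks
      (a10 x t • matE + a11 x t • matΓ) (b10 x t • matE + b11 x t • matΓ)
      (c10 x t • matE + c11 x t • matΓ) (d10 x t • matE + d11 x t • matΓ))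
    (hT0 : ∀ x t : ℝ, T0 x t = Matrix.fromBlocks
      (a0 x t • matE + a1 x t • matΓ) (b0 x t • matE + b1 x t • matΓ)
      (c0 x t • matE + c1 x t • matΓ) (d0 x t • matE + d1 x t • matΓ))
    (T : ℂ → ℝ → ℝ → Matrix (Fin 2 ⊕ Fin 2) (Fin 2 ⊕ Fin 2) ℂ)
    (hT : ∀ (l : ℂ) (x t : ℝ), T l x t = l • T1 x t + T0 x t)
    (F F1 : ℂ → ℝ → ℝ → Matrix (Fin 2 ⊕ Fin 2) (Fin 2 ⊕ Fin 2) ℂ)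
    (hF : ∀ (l : ℂ) (x t : ℝ), F l x t = Matrix.fromBlocks
      ((-I * l) • matE)
      (q x t • matE + r x t • matΓ)
      ((-(starRingEnd ℂ) (q x t)) • matE + (-(starRingEnd ℂ) (r x t)) • matΓ)
      ((I * l) • matE))
    (hF1 : ∀ (l : ℂ) (x t : ℝ), F1 l x t = Matrix.fromBlocks
      ((-I * l) • matE)
      (q1 x t • matE + r1 x t • matΓ)
      ((-(starRingEnd ℂ) (q1 x t)) • matE + (-(starRingEnd ℂ) (r1 x t)) • matΓ)
      ((I * l) • matE))
    (hDarboux : ∀ (l : ℂ) (x t : ℝ),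
      mDX (T l) x t + T l x t * F l x t = F1 l x t * T l x t) :
    ∀ x t : ℝ,
      (b10 x t = 0 ∧ b11 x t = 0 ∧ c10 x t = 0 ∧ c11 x t = 0)
      ∧ (pX a10 x t = 0 ∧ pX a11 x t = 0 ∧ pX d10 x t = 0 ∧ pX d11 x t = 0)
      ∧ (-2 * I * b0 x t + q1 x t * d10 x t - q x t * a10 x t = 0)
      ∧ (-2 * I * b1 x t + r1 x t * d10 x t + q1 x t * d11 x t
          - q x t * a11 x t - r x t * a10 x t = 0) := by
  have key : ∀ x t : ℝ,
      (b10 x t = 0 ∧ b11 x t = 0 ∧ c10 x t = 0 ∧ c11 x t = 0)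
      ∧ (pX a10 x t = 0 ∧ pX a11 x t = 0 ∧ pX d10 x t = 0 ∧ pX d11 x t = 0)
      ∧ (-2 * I * b0 x t + q1 x t * d10 x t - q x t * a10 x t = pX b10 x t)
      ∧ (-2 * I * b1 x t + r1 x t * d10 x t + q1 x t * d11 x t
          - q x t * a11 x t - r x t * a10 x t = pX b11 x t) := by
    intro x t
    have hcomp : ∀ f ∈ ([a10, a11, b10, b11, c10, c11, d10, d11,
                     a0, a1, b0, b1, c0, c1, d0, d1] : List (ℝ → ℝ → ℂ)),
        DifferentiableAt ℝ (fun x' => f x' t) x := fun f hf =>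
      ((hdiff f hf).comp (differentiable_id.prodMk (differentiable_const t))).differentiableAt
    have hda10 := hcomp a10 (by simp)
    have hda11 := hcomp a11 (by simp)
    have hdb10 := hcomp b10 (by simp)
    have hdb11 := hcomp b11 (by simp)
    have hdc10 := hcomp c10 (by simp)
    have hdc11 := hcomp c11 (by simp)
    have hdd10 := hcomp d10 (by simp)
    have hdd11 := hcomp d11 (by simp)
    have hda0 := hcomp a0 (by simp)
    have hda1 := hcomp a1 (by simp)
    have hdb0 := hcomp b0 (by simp)
    have hdb1 := hcomp b1 (by simp)
    have hdc0 := hcomp c0 (by simp)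
    have hdc1 := hcomp c1 (by simp)
    have hdd0 := hcomp d0 (by simp)
    have hdd1 := hcomp d1 (by simp)
    have hT1' : ∀ x' t' : ℝ, T1 x' t' = Matrix.fromBlocks
        !![a10 x' t', 0; a11 x' t', a10 x' t'] !![b10 x' t', 0; b11 x' t', b10 x' t']
        !![c10 x' t', 0; c11 x' t', c10 x' t'] !![d10 x' t', 0; d11 x' t', d10 x' t'] := by
      intro x' t'; rw [hT1, aux_block, aux_block, aux_block, aux_block]
    have hT0' : ∀ x' t' : ℝ, T0 x' t' = Matrix.fromBlocks
        !![a0 x' t', 0; a1 x' t', a0 x' t'] !![b0 x' t', 0; b1 x' t', b0 x' t']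
        !![c0 x' t', 0; c1 x' t', c0 x' t'] !![d0 x' t', 0; d1 x' t', d0 x' t'] := by
      intro x' t'; rw [hT0, aux_block, aux_block, aux_block, aux_block]
    have hF' : ∀ (l : ℂ) (x' t' : ℝ), F l x' t' = Matrix.fromBlocks
        !![-I * l, 0; 0, -I * l] !![q x' t', 0; r x' t', q x' t']
        !![-(starRingEnd ℂ) (q x' t'), 0; -(starRingEnd ℂ) (r x' t'), -(starRingEnd ℂ) (q x' t')]
        !![I * l, 0; 0, I * l] := by
      intro l x' t'; rw [hF, aux_smulE, aux_block, aux_block, aux_smulE]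
    have hF1' : ∀ (l : ℂ) (x' t' : ℝ), F1 l x' t' = Matrix.fromBlocks
        !![-I * l, 0; 0, -I * l] !![q1 x' t', 0; r1 x' t', q1 x' t']
        !![-(starRingEnd ℂ) (q1 x' t'), 0; -(starRingEnd ℂ) (r1 x' t'), -(starRingEnd ℂ) (q1 x' t')]
        !![I * l, 0; 0, I * l] := by
      intro l x' t'; rw [hF1, aux_smulE, aux_block, aux_block, aux_smulE]
    have hdT1 : ∀ i j : Fin 2 ⊕ Fin 2, DifferentiableAt ℝ (fun x' => T1 x' t i j) x := by
      intro i j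
      rcases i with i | i <;> rcases j with j | j <;> fin_cases i <;> fin_cases j <;>
        simp only [hT1', Matrix.fromBlocks_apply₁₁, Matrix.fromBlocks_apply₁₂,
          Matrix.fromBlocks_apply₂₁, Matrix.fromBlocks_apply₂₂,
          Matrix.cons_val', Matrix.cons_val_zero, Matrix.cons_val_one, Matrix.head_cons,
          Matrix.empty_val', Matrix.cons_val_fin_one, Matrix.head_fin_const] <;>
        first
          | exact differentiableAt_const _
          | exact hda10 | exact hda11 | exact hdb10 | exact hdb11
          | exact hdc10 | exact hdc11 | exact hdd10 | exact hdd11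
    have hdT0 : ∀ i j : Fin 2 ⊕ Fin 2, DifferentiableAt ℝ (fun x' => T0 x' t i j) x := by
      intro i j
      rcases i with i | i <;> rcases j with j | j <;> fin_cases i <;> fin_cases j <;>
        simp only [hT0', Matrix.fromBlocks_apply₁₁, Matrix.fromBlocks_apply₁₂,
          Matrix.fromBlocks_apply₂₁, Matrix.fromBlocks_apply₂₂,
          Matrix.cons_val', Matrix.cons_val_zero, Matrix.cons_val_one, Matrix.head_cons,
          Matrix.empty_val', Matrix.cons_val_fin_one, Matrix.head_fin_const] <;>
        first
          | exact differentiableAt_const _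
          | exact hda0 | exact hda1 | exact hdb0 | exact hdb1
          | exact hdc0 | exact hdc1 | exact hdd0 | exact hdd1
    have hmT : ∀ l : ℂ, mDX (T l) x t = l • mDX T1 x t + mDX T0 x t := by
      intro l
      ext i j
      simp only [mDX, Matrix.of_apply, Matrix.add_apply, Matrix.smul_apply, smul_eq_mul]
      have e : (fun x' => T l x' t i j) = fun x' => l * T1 x' t i j + T0 x' t i j := by
        funext x'
        rw [hT]
        simp [Matrix.add_apply, Matrix.smul_apply]
      rw [e, deriv_fun_add ((hdT1 i j).const_mul l) (hdT0 i j), deriv_const_mul l (hdT1 i j)]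
    have Hent : ∀ (l : ℂ) (i j : Fin 2 ⊕ Fin 2),
        (l • mDX T1 x t) i j + (mDX T0 x t) i j + (T l x t * F l x t) i j
          = (F1 l x t * T l x t) i j := by
      intro l i j
      have H := hDarboux l x t
      rw [hmT l] at H
      have := congrFun (congrFun H i) j
      simpa [Matrix.add_apply] using this
    -- entry (inl 0, inr 0)
    have s0 := Hent 0 (Sum.inl 0) (Sum.inr 0)
    have s1 := Hent 1 (Sum.inl 0) (Sum.inr 0)
    have sm1 := Hent (-1) (Sum.inl 0) (Sum.inr 0)
    -- entry (inl 1, inr 0)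
    have t0 := Hent 0 (Sum.inl 1) (Sum.inr 0)
    have t1 := Hent 1 (Sum.inl 1) (Sum.inr 0)
    have tm1 := Hent (-1) (Sum.inl 1) (Sum.inr 0)
    -- entry (inr 0, inl 0)
    have p0 := Hent 0 (Sum.inr 0) (Sum.inl 0)
    have p1 := Hent 1 (Sum.inr 0) (Sum.inl 0)
    have pm1 := Hent (-1) (Sum.inr 0) (Sum.inl 0)
    -- entry (inr 1, inl 0)
    have o0 := Hent 0 (Sum.inr 1) (Sum.inl 0)
    have o1 := Hent 1 (Sum.inr 1) (Sum.inl 0)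
    have om1 := Hent (-1) (Sum.inr 1) (Sum.inl 0)
    -- entry (inl 0, inl 0)
    have u1 := Hent 1 (Sum.inl 0) (Sum.inl 0)
    have um1 := Hent (-1) (Sum.inl 0) (Sum.inl 0)
    -- entry (inl 1, inl 0)
    have v1 := Hent 1 (Sum.inl 1) (Sum.inl 0)
    have vm1 := Hent (-1) (Sum.inl 1) (Sum.inl 0)
    -- entry (inr 0, inr 0)
    have w1 := Hent 1 (Sum.inr 0) (Sum.inr 0)
    have wm1 := Hent (-1) (Sum.inr 0) (Sum.inr 0)
    -- entry (inr 1, inr 0)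
    have z1 := Hent 1 (Sum.inr 1) (Sum.inr 0)
    have zm1 := Hent (-1) (Sum.inr 1) (Sum.inr 0)
    simp only [hT, hT1', hT0', hF', hF1', mDX, Matrix.of_apply, Matrix.add_apply,
      Matrix.smul_apply, smul_eq_mul, Matrix.mul_apply, Fintype.sum_sum_type,
      Fin.sum_univ_two, Matrix.fromBlocks_apply₁₁, Matrix.fromBlocks_apply₁₂,
      Matrix.fromBlocks_apply₂₁, Matrix.fromBlocks_apply₂₂,
      Matrix.cons_val', Matrix.cons_val_zero, Matrix.cons_val_one, Matrix.head_cons,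
      Matrix.empty_val', Matrix.cons_val_fin_one, Matrix.head_fin_const,
      mul_zero, zero_mul, add_zero, zero_add, mul_one, one_mul, neg_mul, mul_neg,
      neg_neg, neg_zero, one_smul, zero_smul]
      at s0 s1 sm1 t0 t1 tm1 p0 p1 pm1 o0 o1 om1 u1 um1 v1 vm1 w1 wm1 z1 zm1
    have hIne : (I : ℂ) ≠ 0 := I_ne_zero
    have hb10 : b10 x t = 0 := by
      have h4 : (4 * I) * b10 x t = 0 := by linear_combination s1 + sm1 - 2 * s0
      have h40 : (4 * I : ℂ) ≠ 0 := by simp [hIne]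
      exact (mul_eq_zero.mp h4).resolve_left h40
    have hb11 : b11 x t = 0 := by
      have h4 : (4 * I) * b11 x t = 0 := by linear_combination t1 + tm1 - 2 * t0
      have h40 : (4 * I : ℂ) ≠ 0 := by simp [hIne]
      exact (mul_eq_zero.mp h4).resolve_left h40
    have hc10 : c10 x t = 0 := by
      have h4 : (-4 * I) * c10 x t = 0 := by linear_combination p1 + pm1 - 2 * p0
      have h40 : (-4 * I : ℂ) ≠ 0 := by simp [hIne]
      exact (mul_eq_zero.mp h4).resolve_left h40
    have hc11 : c11 x t = 0 := by
      have h4 : (-4 * I) * c11 x t = 0 := by linear_combination o1 + om1 - 2 * o0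
      have h40 : (-4 * I : ℂ) ≠ 0 := by simp [hIne]
      exact (mul_eq_zero.mp h4).resolve_left h40
    refine ⟨⟨hb10, hb11, hc10, hc11⟩, ⟨?_, ?_, ?_, ?_⟩, ?_, ?_⟩
    · show deriv (fun x' => a10 x' t) x = 0
      linear_combination (1/2 : ℂ) * u1 - (1/2 : ℂ) * um1
        + (starRingEnd ℂ) (q x t) * hb10 + q1 x t * hc10
    · show deriv (fun x' => a11 x' t) x = 0
      linear_combination (1/2 : ℂ) * v1 - (1/2 : ℂ) * vm1
        + (starRingEnd ℂ) (q x t) * hb11 + (starRingEnd ℂ) (r x t) * hb10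
        + r1 x t * hc10 + q1 x t * hc11
    · show deriv (fun x' => d10 x' t) x = 0
      linear_combination (1/2 : ℂ) * w1 - (1/2 : ℂ) * wm1
        - q x t * hc10 - (starRingEnd ℂ) (q1 x t) * hb10
    · show deriv (fun x' => d11 x' t) x = 0
      linear_combination (1/2 : ℂ) * z1 - (1/2 : ℂ) * zm1
        - q x t * hc11 - r x t * hc10
        - (starRingEnd ℂ) (r1 x t) * hb10 - (starRingEnd ℂ) (q1 x t) * hb11
    · show _ = deriv (fun x' => b10 x' t) x
      linear_combination (-1/2 : ℂ) * s1 + (1/2 : ℂ) * sm1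
    · show _ = deriv (fun x' => b11 x' t) x
      linear_combination (-1/2 : ℂ) * t1 + (1/2 : ℂ) * tm1
  intro x t
  obtain ⟨h1, h2, h3, h4⟩ := key x t
  have hpb10 : pX b10 x t = 0 := by
    have e : (fun x' => b10 x' t) = fun _ => (0 : ℂ) := funext fun x' => (key x' t).1.1
    show deriv (fun x' => b10 x' t) x = 0
    rw [e]
    exact deriv_const x 0
  have hpb11 : pX b11 x t = 0 := by
    have e : (fun x' => b11 x' t) = fun _ => (0 : ℂ) := funext fun x' => (key x' t).1.2.1
    show deriv (fun x' => b11 x' t) x = 0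
    rw [e]
    exact deriv_const x 0
  exact ⟨h1, h2, by rw [h3, hpb10], by rw [h4, hpb11]⟩
end

section
/- Let a, c, d ∈ ℝ with c ≠ 0, set b = 2c² − a² and ρ(x,t) = ax + bt, and let q = c·e^{iρ}, r = i·d·e^{iρ}. Let λ ∈ ℂ, let R ∈ ℂ satisfy R² = −a² − 4aλ − 4c² − 4λ², and let n₁, k₁ ∈ ℂ. Define ξ(x,t) = R·(x/2 + (λ − a/2)t) and ψ110 = n₁·e^{iρ/2 + ξ}, ψ111 = k₁·e^{iρ/2 + ξ}, ψ120 = ((ai + 2iλ + R)·n₁/(2c))·e^{−iρ/2 + ξ}, ψ121 = (((aci + 2ciλ + Rc)·k₁ + (ad + 2dλ − iRd)·n₁)/(2c²))·e^{−iρ/2 + ξ}. Then (ψ110, ψ111, ψ120, ψ121) is a solution of the Lax system of the Frobenius NLS equation at spectral parameter λ for the potentials (q,r). -/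
open Complex

lemma aux_x (A μ ν : ℂ) (x : ℝ) :
    deriv (fun x' : ℝ => A * Complex.exp (μ * ↑x' + ν)) x
      = μ * (A * Complex.exp (μ * ↑x + ν)) := by
  have h0 : HasDerivAt (fun x' : ℝ => μ * (x' : ℂ) + ν) μ x := by
    simpa using ((Complex.ofRealCLM.hasDerivAt (x := x)).const_mul μ).add_const ν
  have h := (h0.cexp.const_mul A).deriv
  rw [h]; ring

lemma aux_t (A μ ν : ℂ) (t : ℝ) :
    deriv (fun t' : ℝ => A * Complex.exp (μ + ν * ↑t')) t
      = ν * (A * Complex.exp (μ + ν * ↑t)) := by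
  have h0 : HasDerivAt (fun t' : ℝ => μ + ν * (t' : ℂ)) ν t := by
    simpa using (((Complex.ofRealCLM.hasDerivAt (x := t)).const_mul ν).const_add μ)
  have h := (h0.cexp.const_mul A).deriv
  rw [h]; ring

set_option maxHeartbeats 2000000 in
/-- the explicit eigenfunctions built from the periodic seed
`q = c e^{iρ}`, `r = i d e^{iρ}` (with `ρ = ax + bt`, `b = 2c² − a²`) and a square root `R`
of `−a² − 4aλ − 4c² − 4λ²` solve the Lax system of the Frobenius NLS equation at `λ`. -/
theorem statement11 (a c d : ℝ) (hc : c ≠ 0) (b : ℝ) (hb : b = 2 * c ^ 2 - a ^ 2)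
    (ρ : ℝ → ℝ → ℝ) (hρ : ∀ x t : ℝ, ρ x t = a * x + b * t)
    (q r : ℝ → ℝ → ℂ)
    (hq : ∀ x t : ℝ, q x t = (c : ℂ) * Complex.exp (I * (ρ x t : ℂ)))
    (hr : ∀ x t : ℝ, r x t = I * (d : ℂ) * Complex.exp (I * (ρ x t : ℂ)))
    (lam R n1 k1 : ℂ)
    (hR : R ^ 2 = -(a : ℂ) ^ 2 - 4 * (a : ℂ) * lam - 4 * (c : ℂ) ^ 2 - 4 * lam ^ 2)
    (ξ : ℝ → ℝ → ℂ)
    (hξ : ∀ x t : ℝ, ξ x t = R * ((x : ℂ) / 2 + (lam - (a : ℂ) / 2) * (t : ℂ)))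
    (ψ110 ψ111 ψ120 ψ121 : ℝ → ℝ → ℂ)
    (h110 : ∀ x t : ℝ, ψ110 x t = n1 * Complex.exp (I * (ρ x t : ℂ) / 2 + ξ x t))
    (h111 : ∀ x t : ℝ, ψ111 x t = k1 * Complex.exp (I * (ρ x t : ℂ) / 2 + ξ x t))
    (h120 : ∀ x t : ℝ, ψ120 x t =
      (((a : ℂ) * I + 2 * I * lam + R) * n1 / (2 * (c : ℂ)))
        * Complex.exp (-(I * (ρ x t : ℂ)) / 2 + ξ x t))
    (h121 : ∀ x t : ℝ, ψ121 x t =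
      ((((a : ℂ) * (c : ℂ) * I + 2 * (c : ℂ) * I * lam + R * (c : ℂ)) * k1
          + ((a : ℂ) * (d : ℂ) + 2 * (d : ℂ) * lam - I * R * (d : ℂ)) * n1) / (2 * (c : ℂ) ^ 2))
        * Complex.exp (-(I * (ρ x t : ℂ)) / 2 + ξ x t)) :
    FrobeniusLaxSolution q r lam ψ110 ψ111 ψ120 ψ121 := by

  subst hb
  have hc' : (c:ℂ) ≠ 0 := Complex.ofReal_ne_zero.mpr hc
  have form : ∀ (f : ℝ → ℝ → ℂ) (A μ ν : ℂ),
      (∀ x t : ℝ, f x t = A * Complex.exp (μ * (x:ℂ) + ν * (t:ℂ))) →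
      ∀ x t : ℝ, pX f x t = μ * (A * Complex.exp (μ * (x:ℂ) + ν * (t:ℂ)))
        ∧ pT f x t = ν * (A * Complex.exp (μ * (x:ℂ) + ν * (t:ℂ))) := by
    intro f A μ ν hf x t
    constructor
    · show deriv (fun x' => f x' t) x = _
      rw [show (fun x' : ℝ => f x' t) = (fun x' : ℝ => A * Complex.exp (μ * (x':ℂ) + ν * (t:ℂ)))
        from funext fun x' => hf x' t]
      exact aux_x A μ (ν * (t:ℂ)) x
    · show deriv (fun t' => f x t') t = _
      rw [show (fun t' : ℝ => f x t') = (fun t' : ℝ => A * Complex.exp (μ * (x:ℂ) + ν * (t':ℂ)))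
        from funext fun t' => hf x t']
      exact aux_t A (μ * (x:ℂ)) ν t
  have E110 : ∀ x t : ℝ, ψ110 x t = n1 * Complex.exp (((I*(a:ℂ)+R)/2) * (x:ℂ) + (I*(2*(c:ℂ)^2-(a:ℂ)^2)/2 + R*(lam-(a:ℂ)/2)) * (t:ℂ)) := by
    intro x t; rw [h110, hρ, hξ]; congr 2; push_cast; ring
  have E111 : ∀ x t : ℝ, ψ111 x t = k1 * Complex.exp (((I*(a:ℂ)+R)/2) * (x:ℂ) + (I*(2*(c:ℂ)^2-(a:ℂ)^2)/2 + R*(lam-(a:ℂ)/2)) * (t:ℂ)) := by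
    intro x t; rw [h111, hρ, hξ]; congr 2; push_cast; ring
  have E120 : ∀ x t : ℝ, ψ120 x t = (((a:ℂ)*I + 2*I*lam + R)*n1/(2*(c:ℂ))) * Complex.exp (((-(I*(a:ℂ))+R)/2) * (x:ℂ) + (-(I*(2*(c:ℂ)^2-(a:ℂ)^2))/2 + R*(lam-(a:ℂ)/2)) * (t:ℂ)) := by
    intro x t; rw [h120, hρ, hξ]; congr 2; push_cast; ring
  have E121 : ∀ x t : ℝ, ψ121 x t = ((((a:ℂ)*(c:ℂ)*I + 2*(c:ℂ)*I*lam + R*(c:ℂ))*k1 + ((a:ℂ)*(d:ℂ) + 2*(d:ℂ)*lam - I*R*(d:ℂ))*n1)/(2*(c:ℂ)^2)) * Complex.exp (((-(I*(a:ℂ))+R)/2) * (x:ℂ) + (-(I*(2*(c:ℂ)^2-(a:ℂ)^2))/2 + R*(lam-(a:ℂ)/2)) * (t:ℂ)) := by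
    intro x t; rw [h121, hρ, hξ]; congr 2; push_cast; ring
  have Eq' : ∀ x t : ℝ, q x t = (c:ℂ) * Complex.exp ((I*(a:ℂ)) * (x:ℂ) + (I*(2*(c:ℂ)^2-(a:ℂ)^2)) * (t:ℂ)) := by
    intro x t; rw [hq, hρ]; congr 2; push_cast; ring
  have Er' : ∀ x t : ℝ, r x t = (I*(d:ℂ)) * Complex.exp ((I*(a:ℂ)) * (x:ℂ) + (I*(2*(c:ℂ)^2-(a:ℂ)^2)) * (t:ℂ)) := by
    intro x t; rw [hr, hρ]; congr 2; push_cast; ring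
  have Ecq : ∀ x t : ℝ, (starRingEnd ℂ) (q x t)
      = (c:ℂ) * Complex.exp ((-(I*(a:ℂ))) * (x:ℂ) + (-(I*(2*(c:ℂ)^2-(a:ℂ)^2))) * (t:ℂ)) := by
    intro x t
    rw [hq, hρ, map_mul, Complex.conj_ofReal, ← Complex.exp_conj,
      show ((starRingEnd ℂ) (I * ((a * x + (2*c^2-a^2)*t : ℝ) : ℂ))) = (-(I*(a:ℂ))) * (x:ℂ) + (-(I*(2*(c:ℂ)^2-(a:ℂ)^2))) * (t:ℂ) from by
        rw [map_mul, Complex.conj_I, Complex.conj_ofReal]; push_cast; ring]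
  have Ecr : ∀ x t : ℝ, (starRingEnd ℂ) (r x t)
      = (-(I*(d:ℂ))) * Complex.exp ((-(I*(a:ℂ))) * (x:ℂ) + (-(I*(2*(c:ℂ)^2-(a:ℂ)^2))) * (t:ℂ)) := by
    intro x t
    rw [hr, hρ, map_mul, map_mul, Complex.conj_I, Complex.conj_ofReal, ← Complex.exp_conj,
      show ((starRingEnd ℂ) (I * ((a * x + (2*c^2-a^2)*t : ℝ) : ℂ))) = (-(I*(a:ℂ))) * (x:ℂ) + (-(I*(2*(c:ℂ)^2-(a:ℂ)^2))) * (t:ℂ) from by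
        rw [map_mul, Complex.conj_I, Complex.conj_ofReal]; push_cast; ring]
    linear_combination (0:ℂ) * hR
  have F110 := form ψ110 n1 ((I*(a:ℂ)+R)/2) (I*(2*(c:ℂ)^2-(a:ℂ)^2)/2 + R*(lam-(a:ℂ)/2)) E110
  have F111 := form ψ111 k1 ((I*(a:ℂ)+R)/2) (I*(2*(c:ℂ)^2-(a:ℂ)^2)/2 + R*(lam-(a:ℂ)/2)) E111
  have F120 := form ψ120 (((a:ℂ)*I + 2*I*lam + R)*n1/(2*(c:ℂ))) ((-(I*(a:ℂ))+R)/2) (-(I*(2*(c:ℂ)^2-(a:ℂ)^2))/2 + R*(lam-(a:ℂ)/2)) E120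
  have F121 := form ψ121 ((((a:ℂ)*(c:ℂ)*I + 2*(c:ℂ)*I*lam + R*(c:ℂ))*k1 + ((a:ℂ)*(d:ℂ) + 2*(d:ℂ)*lam - I*R*(d:ℂ))*n1)/(2*(c:ℂ)^2)) ((-(I*(a:ℂ))+R)/2) (-(I*(2*(c:ℂ)^2-(a:ℂ)^2))/2 + R*(lam-(a:ℂ)/2)) E121
  have Fq := form q (c:ℂ) (I*(a:ℂ)) (I*(2*(c:ℂ)^2-(a:ℂ)^2)) Eq'
  have Fr := form r (I*(d:ℂ)) (I*(a:ℂ)) (I*(2*(c:ℂ)^2-(a:ℂ)^2)) Er'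
  have Fcq := form (fun x t => (starRingEnd ℂ) (q x t)) (c:ℂ) (-(I*(a:ℂ))) (-(I*(2*(c:ℂ)^2-(a:ℂ)^2))) Ecq
  have Fcr := form (fun x t => (starRingEnd ℂ) (r x t)) (-(I*(d:ℂ))) (-(I*(a:ℂ))) (-(I*(2*(c:ℂ)^2-(a:ℂ)^2))) Ecr
  intro x t
  have hsplit1 : Complex.exp (((I*(a:ℂ)+R)/2) * (x:ℂ) + (I*(2*(c:ℂ)^2-(a:ℂ)^2)/2 + R*(lam-(a:ℂ)/2)) * (t:ℂ))
      = Complex.exp (((-(I*(a:ℂ))+R)/2) * (x:ℂ) + (-(I*(2*(c:ℂ)^2-(a:ℂ)^2))/2 + R*(lam-(a:ℂ)/2)) * (t:ℂ)) * Complex.exp ((I*(a:ℂ)) * (x:ℂ) + (I*(2*(c:ℂ)^2-(a:ℂ)^2)) * (t:ℂ)) := by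
    rw [← Complex.exp_add]; congr 1; ring
  have hsplit2 : Complex.exp (((-(I*(a:ℂ))+R)/2) * (x:ℂ) + (-(I*(2*(c:ℂ)^2-(a:ℂ)^2))/2 + R*(lam-(a:ℂ)/2)) * (t:ℂ))
      = Complex.exp (((I*(a:ℂ)+R)/2) * (x:ℂ) + (I*(2*(c:ℂ)^2-(a:ℂ)^2)/2 + R*(lam-(a:ℂ)/2)) * (t:ℂ)) * (Complex.exp ((I*(a:ℂ)) * (x:ℂ) + (I*(2*(c:ℂ)^2-(a:ℂ)^2)) * (t:ℂ)))⁻¹ := by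
    rw [← Complex.exp_neg, ← Complex.exp_add]; congr 1; ring
  have hinv : Complex.exp ((-(I*(a:ℂ))) * (x:ℂ) + (-(I*(2*(c:ℂ)^2-(a:ℂ)^2))) * (t:ℂ))
      = (Complex.exp ((I*(a:ℂ)) * (x:ℂ) + (I*(2*(c:ℂ)^2-(a:ℂ)^2)) * (t:ℂ)))⁻¹ := by
    rw [← Complex.exp_neg]; congr 1; ring
  refine ⟨?_, ?_, ?_, ?_, ?_, ?_, ?_, ?_⟩
  · rw [(F110 x t).1, E110 x t, E120 x t, Eq' x t, hsplit2]
    have hW := Complex.exp_ne_zero ((I*(a:ℂ)) * (x:ℂ) + (I*(2*(c:ℂ)^2-(a:ℂ)^2)) * (t:ℂ))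
    generalize hgW : Complex.exp ((I*(a:ℂ)) * (x:ℂ) + (I*(2*(c:ℂ)^2-(a:ℂ)^2)) * (t:ℂ)) = W
    rw [hgW] at hW
    generalize hgE : Complex.exp (((I*(a:ℂ)+R)/2) * (x:ℂ) + (I*(2*(c:ℂ)^2-(a:ℂ)^2)/2 + R*(lam-(a:ℂ)/2)) * (t:ℂ)) = E
    field_simp [hW, hc']
    linear_combination (0:ℂ) * hR
  · rw [(F111 x t).1, E111 x t, E121 x t, E120 x t, Eq' x t, Er' x t, hsplit2]
    have hW := Complex.exp_ne_zero ((I*(a:ℂ)) * (x:ℂ) + (I*(2*(c:ℂ)^2-(a:ℂ)^2)) * (t:ℂ))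
    generalize hgW : Complex.exp ((I*(a:ℂ)) * (x:ℂ) + (I*(2*(c:ℂ)^2-(a:ℂ)^2)) * (t:ℂ)) = W
    rw [hgW] at hW
    generalize hgE : Complex.exp (((I*(a:ℂ)+R)/2) * (x:ℂ) + (I*(2*(c:ℂ)^2-(a:ℂ)^2)/2 + R*(lam-(a:ℂ)/2)) * (t:ℂ)) = E
    field_simp [hW, hc']
    have hWW : W * W⁻¹ = 1 := mul_inv_cancel₀ hW
    have hcc : (c:ℂ) * (c:ℂ)⁻¹ = 1 := mul_inv_cancel₀ hc'
    linear_combination (0:ℂ) * hR + ((-8:ℂ)*(c:ℂ)^2*(d:ℂ)*lam*E*W^2*n1 + (-4:ℂ)*(a:ℂ)*(c:ℂ)^2*(d:ℂ)*E*W^2*n1) * Complex.I_sq + (0:ℂ) * hcc + (0:ℂ) * hWW + (0:ℂ) * hR + ((4:ℂ)*(a:ℂ)*(c:ℂ)^2*(d:ℂ)*n1*E*W^2 + (-1:ℂ)*(a:ℂ)*(d:ℂ)*n1*E + (8:ℂ)*(c:ℂ)^2*(d:ℂ)*lam*n1*E*W^2 + (-2:ℂ)*(d:ℂ)*lam*n1*E)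 * Complex.I_sq
  · rw [(F120 x t).1, E120 x t, E110 x t, Ecq x t, hsplit1, hinv]
    have hW := Complex.exp_ne_zero ((I*(a:ℂ)) * (x:ℂ) + (I*(2*(c:ℂ)^2-(a:ℂ)^2)) * (t:ℂ))
    generalize hgW : Complex.exp ((I*(a:ℂ)) * (x:ℂ) + (I*(2*(c:ℂ)^2-(a:ℂ)^2)) * (t:ℂ)) = W
    rw [hgW] at hW
    generalize hgE : Complex.exp (((-(I*(a:ℂ))+R)/2) * (x:ℂ) + (-(I*(2*(c:ℂ)^2-(a:ℂ)^2))/2 + R*(lam-(a:ℂ)/2)) * (t:ℂ)) = E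
    field_simp [hW, hc']
    have hWW : W * W⁻¹ = 1 := mul_inv_cancel₀ hW
    have hcc : (c:ℂ) * (c:ℂ)⁻¹ = 1 := mul_inv_cancel₀ hc'
    linear_combination ((2:ℂ)*(c:ℂ)*E*W*n1) * hR + ((-8:ℂ)*(c:ℂ)*lam^2*E*W*n1 + (-8:ℂ)*(a:ℂ)*(c:ℂ)*lam*E*W*n1 + (-2:ℂ)*(a:ℂ)^2*(c:ℂ)*E*W*n1) * Complex.I_sq + (0:ℂ) * hcc + (0:ℂ) * hWW + ((1:ℂ)*n1*E + (-2:ℂ)*(c:ℂ)*n1*E*W) * hR + ((-4:ℂ)*(a:ℂ)*lam*n1*E + (8:ℂ)*(a:ℂ)*(c:ℂ)*lam*n1*E*W + (-1:ℂ)*(a:ℂ)^2*n1*E + (2:ℂ)*(a:ℂ)^2*(c:ℂ)*n1*E*W + (-4:ℂ)*lam^2*n1*E + (8:ℂ)*(c:ℂ)*lam^2*n1*E*W) * Complex.I_sq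
  · rw [(F121 x t).1, E121 x t, E111 x t, E110 x t, Ecq x t, Ecr x t, hsplit1, hinv]
    have hW := Complex.exp_ne_zero ((I*(a:ℂ)) * (x:ℂ) + (I*(2*(c:ℂ)^2-(a:ℂ)^2)) * (t:ℂ))
    generalize hgW : Complex.exp ((I*(a:ℂ)) * (x:ℂ) + (I*(2*(c:ℂ)^2-(a:ℂ)^2)) * (t:ℂ)) = W
    rw [hgW] at hW
    generalize hgE : Complex.exp (((-(I*(a:ℂ))+R)/2) * (x:ℂ) + (-(I*(2*(c:ℂ)^2-(a:ℂ)^2))/2 + R*(lam-(a:ℂ)/2)) * (t:ℂ)) = E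
    field_simp [hW, hc']
    have hWW : W * W⁻¹ = 1 := mul_inv_cancel₀ hW
    have hcc : (c:ℂ) * (c:ℂ)⁻¹ = 1 := mul_inv_cancel₀ hc'
    linear_combination ((2:ℂ)*(c:ℂ)^3*E*W^2*k1 + (-2:ℂ)*I*(c:ℂ)^2*(d:ℂ)*E*W^2*n1) * hR + ((4:ℂ)*(c:ℂ)^2*(d:ℂ)*lam*R*E*W^2*n1 + (-8:ℂ)*(c:ℂ)^3*lam^2*E*W^2*k1 + (2:ℂ)*(a:ℂ)*(c:ℂ)^2*(d:ℂ)*R*E*W^2*n1 + (-8:ℂ)*(a:ℂ)*(c:ℂ)^3*lam*E*W^2*k1 + (-2:ℂ)*(a:ℂ)^2*(c:ℂ)^3*E*W^2*k1) * Complex.I_sq + (0:ℂ) * hcc + (0:ℂ) * hWW + ((2:ℂ)*I*(c:ℂ)^2*(d:ℂ)*n1*E*W^2 + (-1:ℂ)*I*(d:ℂ)*n1*E + (1:ℂ)*(c:ℂ)*k1*E + (-2:ℂ)*(c:ℂ)^3*k1*E*W^2) * hR + ((-2:ℂ)*(a:ℂ)*(c:ℂ)^2*(d:ℂ)*R*n1*E*W^2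 + (1:ℂ)*(a:ℂ)*(d:ℂ)*R*n1*E + (-4:ℂ)*(a:ℂ)*(c:ℂ)*lam*k1*E + (8:ℂ)*(a:ℂ)*(c:ℂ)^3*lam*k1*E*W^2 + (-1:ℂ)*(a:ℂ)^2*(c:ℂ)*k1*E + (2:ℂ)*(a:ℂ)^2*(c:ℂ)^3*k1*E*W^2 + (-4:ℂ)*(c:ℂ)^2*(d:ℂ)*lam*R*n1*E*W^2 + (2:ℂ)*(d:ℂ)*lam*R*n1*E + (-4:ℂ)*(c:ℂ)*lam^2*k1*E + (8:ℂ)*(c:ℂ)^3*lam^2*k1*E*W^2) * Complex.I_sq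
  · rw [(F110 x t).2, (Fq x t).1, Ecq x t, Eq' x t, E110 x t, E120 x t, hsplit2, hinv]
    have hW := Complex.exp_ne_zero ((I*(a:ℂ)) * (x:ℂ) + (I*(2*(c:ℂ)^2-(a:ℂ)^2)) * (t:ℂ))
    generalize hgW : Complex.exp ((I*(a:ℂ)) * (x:ℂ) + (I*(2*(c:ℂ)^2-(a:ℂ)^2)) * (t:ℂ)) = W
    rw [hgW] at hW
    generalize hgE : Complex.exp (((I*(a:ℂ)+R)/2) * (x:ℂ) + (I*(2*(c:ℂ)^2-(a:ℂ)^2)/2 + R*(lam-(a:ℂ)/2)) * (t:ℂ)) = E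
    field_simp [hW, hc']
    have hWW : W * W⁻¹ = 1 := mul_inv_cancel₀ hW
    have hcc : (c:ℂ) * (c:ℂ)⁻¹ = 1 := mul_inv_cancel₀ hc'
    linear_combination (0:ℂ) * hR + ((-2:ℂ)*(a:ℂ)*(c:ℂ)*R*E*W^2*n1 + (-4:ℂ)*I*(a:ℂ)*(c:ℂ)*lam*E*W^2*n1 + (-2:ℂ)*I*(a:ℂ)^2*(c:ℂ)*E*W^2*n1) * Complex.I_sq + (0:ℂ) * hcc + (0:ℂ) * hWW + (0:ℂ) * hR + ((2:ℂ)*(a:ℂ)*(c:ℂ)*R*n1*E*W^2 + (-1:ℂ)*(a:ℂ)*R*n1*E + (4:ℂ)*I*(a:ℂ)*(c:ℂ)*lam*n1*E*W^2 + (2:ℂ)*I*(a:ℂ)^2*(c:ℂ)*n1*E*W^2 + (-2:ℂ)*I*(a:ℂ)*lam*n1*E + (-1:ℂ)*I*(a:ℂ)^2*n1*E) * Complex.I_sq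
  · rw [(F111 x t).2, (Fq x t).1, (Fr x t).1, Ecq x t, Ecr x t, Eq' x t, Er' x t,
      E111 x t, E110 x t, E121 x t, E120 x t, hsplit2, hinv]
    have hW := Complex.exp_ne_zero ((I*(a:ℂ)) * (x:ℂ) + (I*(2*(c:ℂ)^2-(a:ℂ)^2)) * (t:ℂ))
    generalize hgW : Complex.exp ((I*(a:ℂ)) * (x:ℂ) + (I*(2*(c:ℂ)^2-(a:ℂ)^2)) * (t:ℂ)) = W
    rw [hgW] at hW
    generalize hgE : Complex.exp (((I*(a:ℂ)+R)/2) * (x:ℂ) + (I*(2*(c:ℂ)^2-(a:ℂ)^2)/2 + R*(lam-(a:ℂ)/2)) * (t:ℂ)) = E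
    field_simp [hW, hc']
    have hWW : W * W⁻¹ = 1 := mul_inv_cancel₀ hW
    have hcc : (c:ℂ) * (c:ℂ)⁻¹ = 1 := mul_inv_cancel₀ hc'
    linear_combination (0:ℂ) * hR + ((-4:ℂ)*(c:ℂ)^2*(d:ℂ)*lam^2*E*W^3*n1*(c:ℂ)⁻¹^3*W⁻¹^3 + (-2:ℂ)*(a:ℂ)*(c:ℂ)^2*(d:ℂ)*lam*E*W^3*n1*(c:ℂ)⁻¹^3*W⁻¹^3 + (-1:ℂ)*(a:ℂ)*(c:ℂ)^3*R*E*W^3*k1*(c:ℂ)⁻¹^3*W⁻¹^3 + (-2:ℂ)*I*(a:ℂ)*(c:ℂ)^3*lam*E*W^3*k1*(c:ℂ)⁻¹^3*W⁻¹^3 + (-1:ℂ)*I*(a:ℂ)^2*(c:ℂ)^3*E*W^3*k1*(c:ℂ)⁻¹^3*W⁻¹^3 + (-2:ℂ)*I^2*(a:ℂ)*(c:ℂ)^2*(d:ℂ)*lam*E*W^3*n1*(c:ℂ)⁻¹^3*W⁻¹^3 + (-1:ℂ)*I^2*(a:ℂ)^2*(c:ℂ)^2*(d:ℂ)*E*W^3*n1*(c:ℂ)⁻¹^3*W⁻¹^3)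 * Complex.I_sq + ((-2:ℂ)*lam*R*E*W^3*k1*W⁻¹^3 + (-2:ℂ)*(c:ℂ)*lam*R*E*W^3*k1*(c:ℂ)⁻¹*W⁻¹^3 + (-2:ℂ)*(c:ℂ)^2*lam*R*E*W^3*k1*(c:ℂ)⁻¹^2*W⁻¹^3 + (a:ℂ)*R*E*W^3*k1*W⁻¹^3 + (a:ℂ)*(c:ℂ)*R*E*W^3*k1*(c:ℂ)⁻¹*W⁻¹^3 + (a:ℂ)*(c:ℂ)^2*R*E*W^3*k1*(c:ℂ)⁻¹^2*W⁻¹^3 + (-2:ℂ)*I*(c:ℂ)^2*E*W^3*k1*W⁻¹^3 + (-2:ℂ)*I*(c:ℂ)^3*E*W^3*k1*(c:ℂ)⁻¹*W⁻¹^3 + (-2:ℂ)*I*(c:ℂ)^4*E*W^3*k1*(c:ℂ)⁻¹^2*W⁻¹^3 + I*(a:ℂ)^2*E*W^3*k1*W⁻¹^3 + I*(a:ℂ)^2*(c:ℂ)*E*W^3*k1*(c:ℂ)⁻¹*W⁻¹^3 + I*(a:ℂ)^2*(c:ℂ)^2*E*W^3*k1*(c:ℂ)⁻¹^2*W⁻¹^3)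 * hcc + ((-2:ℂ)*lam*R*E*k1 + (-2:ℂ)*lam*R*E*W*k1*W⁻¹ + (-2:ℂ)*lam*R*E*W^2*k1*W⁻¹^2 + (a:ℂ)*R*E*k1 + (a:ℂ)*R*E*W*k1*W⁻¹ + (a:ℂ)*R*E*W^2*k1*W⁻¹^2 + (-2:ℂ)*I*(c:ℂ)^2*E*k1 + (-2:ℂ)*I*(c:ℂ)^2*E*W*k1*W⁻¹ + (-2:ℂ)*I*(c:ℂ)^2*E*W^2*k1*W⁻¹^2 + I*(a:ℂ)^2*E*k1 + I*(a:ℂ)^2*E*W*k1*W⁻¹ + I*(a:ℂ)^2*E*W^2*k1*W⁻¹^2) * hWW + (0:ℂ) * hR + ((-1:ℂ)*(a:ℂ)*(c:ℂ)*R*k1*E + (-2:ℂ)*I*(a:ℂ)*(c:ℂ)*lam*k1*E + (-1:ℂ)*I*(a:ℂ)^2*(c:ℂ)*k1*E + (2:ℂ)*(a:ℂ)*(c:ℂ)^2*(d:ℂ)*lam*n1*E*W^3*(c:ℂ)⁻¹^3*W⁻¹^3 + (4:ℂ)*(c:ℂ)^2*(d:ℂ)*lam^2*n1*E*W^3*(c:ℂ)⁻¹^3*W⁻¹^3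 + (2:ℂ)*I^2*(a:ℂ)*(c:ℂ)^2*(d:ℂ)*lam*n1*E*W^3*(c:ℂ)⁻¹^3*W⁻¹^3 + (1:ℂ)*I^2*(a:ℂ)^2*(c:ℂ)^2*(d:ℂ)*n1*E*W^3*(c:ℂ)⁻¹^3*W⁻¹^3 + (1:ℂ)*(a:ℂ)*(c:ℂ)^3*R*k1*E*W^3*(c:ℂ)⁻¹^3*W⁻¹^3 + (2:ℂ)*I*(a:ℂ)*(c:ℂ)^3*lam*k1*E*W^3*(c:ℂ)⁻¹^3*W⁻¹^3 + (1:ℂ)*I*(a:ℂ)^2*(c:ℂ)^3*k1*E*W^3*(c:ℂ)⁻¹^3*W⁻¹^3 + (-2:ℂ)*(a:ℂ)*(d:ℂ)*lam*n1*E + (-4:ℂ)*(d:ℂ)*lam^2*n1*E + (-2:ℂ)*I^2*(a:ℂ)*(d:ℂ)*lam*n1*E + (-1:ℂ)*I^2*(a:ℂ)^2*(d:ℂ)*n1*E) * Complex.I_sq + ((2:ℂ)*(c:ℂ)^2*lam*R*k1*E*W^3*(c:ℂ)⁻¹^2*W⁻¹^3 + (2:ℂ)*I*(c:ℂ)^4*k1*E*W^3*(c:ℂ)⁻¹^2*W⁻¹^3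 + (-1:ℂ)*(a:ℂ)*(c:ℂ)^2*R*k1*E*W^3*(c:ℂ)⁻¹^2*W⁻¹^3 + (-1:ℂ)*I*(a:ℂ)^2*(c:ℂ)^2*k1*E*W^3*(c:ℂ)⁻¹^2*W⁻¹^3 + (2:ℂ)*(c:ℂ)*lam*R*k1*E*W^3*(c:ℂ)⁻¹*W⁻¹^3 + (2:ℂ)*I*(c:ℂ)^3*k1*E*W^3*(c:ℂ)⁻¹*W⁻¹^3 + (-1:ℂ)*(a:ℂ)*(c:ℂ)*R*k1*E*W^3*(c:ℂ)⁻¹*W⁻¹^3 + (-1:ℂ)*I*(a:ℂ)^2*(c:ℂ)*k1*E*W^3*(c:ℂ)⁻¹*W⁻¹^3 + (2:ℂ)*lam*R*k1*E*W^3*W⁻¹^3 + (2:ℂ)*I*(c:ℂ)^2*k1*E*W^3*W⁻¹^3 + (-1:ℂ)*(a:ℂ)*R*k1*E*W^3*W⁻¹^3 + (-1:ℂ)*I*(a:ℂ)^2*k1*E*W^3*W⁻¹^3) * hcc + ((2:ℂ)*lam*R*k1*E*W^2*W⁻¹^2 + (2:ℂ)*I*(c:ℂ)^2*k1*E*W^2*W⁻¹^2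 + (-1:ℂ)*(a:ℂ)*R*k1*E*W^2*W⁻¹^2 + (-1:ℂ)*I*(a:ℂ)^2*k1*E*W^2*W⁻¹^2 + (2:ℂ)*lam*R*k1*E*W*W⁻¹ + (2:ℂ)*I*(c:ℂ)^2*k1*E*W*W⁻¹ + (-1:ℂ)*(a:ℂ)*R*k1*E*W*W⁻¹ + (-1:ℂ)*I*(a:ℂ)^2*k1*E*W*W⁻¹ + (2:ℂ)*lam*R*k1*E + (2:ℂ)*I*(c:ℂ)^2*k1*E + (-1:ℂ)*(a:ℂ)*R*k1*E + (-1:ℂ)*I*(a:ℂ)^2*k1*E) * hWW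
  · rw [(F120 x t).2, (Fcq x t).1, Ecq x t, Eq' x t, E110 x t, E120 x t, hsplit1, hinv]
    have hW := Complex.exp_ne_zero ((I*(a:ℂ)) * (x:ℂ) + (I*(2*(c:ℂ)^2-(a:ℂ)^2)) * (t:ℂ))
    generalize hgW : Complex.exp ((I*(a:ℂ)) * (x:ℂ) + (I*(2*(c:ℂ)^2-(a:ℂ)^2)) * (t:ℂ)) = W
    rw [hgW] at hW
    generalize hgE : Complex.exp (((-(I*(a:ℂ))+R)/2) * (x:ℂ) + (-(I*(2*(c:ℂ)^2-(a:ℂ)^2))/2 + R*(lam-(a:ℂ)/2)) * (t:ℂ)) = E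
    field_simp [hW, hc']
    have hWW : W * W⁻¹ = 1 := mul_inv_cancel₀ hW
    have hcc : (c:ℂ) * (c:ℂ)⁻¹ = 1 := mul_inv_cancel₀ hc'
    linear_combination ((8:ℂ)*(c:ℂ)*lam*E*W^3*n1 + (-4:ℂ)*(a:ℂ)*(c:ℂ)*E*W^3*n1) * hR + ((-32:ℂ)*(c:ℂ)*lam^3*E*W^3*n1 + (-16:ℂ)*(a:ℂ)*(c:ℂ)*lam^2*E*W^3*n1 + (16:ℂ)*(a:ℂ)*(c:ℂ)^3*E*W^3*n1 + (8:ℂ)*(a:ℂ)^2*(c:ℂ)*lam*E*W^3*n1 + (4:ℂ)*(a:ℂ)^3*(c:ℂ)*E*W^3*n1) * Complex.I_sq + (0:ℂ) * hcc + (0:ℂ) * hWW + ((4:ℂ)*(a:ℂ)*(c:ℂ)*n1*E*W^3 + (-8:ℂ)*(c:ℂ)*lam*n1*E*W^3 + (-1:ℂ)*(a:ℂ)*n1*E + (2:ℂ)*lam*n1*E) * hR + ((16:ℂ)*(a:ℂ)*(c:ℂ)*lam^2*n1*E*W^3 + (-8:ℂ)*(a:ℂ)^2*(c:ℂ)*lam*n1*E*W^3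 + (-4:ℂ)*(a:ℂ)^3*(c:ℂ)*n1*E*W^3 + (32:ℂ)*(c:ℂ)*lam^3*n1*E*W^3 + (4:ℂ)*(a:ℂ)*(c:ℂ)^2*n1*E + (-16:ℂ)*(a:ℂ)*(c:ℂ)^3*n1*E*W^3 + (-4:ℂ)*(a:ℂ)*lam^2*n1*E + (2:ℂ)*(a:ℂ)^2*lam*n1*E + (1:ℂ)*(a:ℂ)^3*n1*E + (-8:ℂ)*lam^3*n1*E) * Complex.I_sq
  · rw [(F121 x t).2, (Fcq x t).1, (Fcr x t).1, Ecq x t, Ecr x t, Eq' x t, Er' x t,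
      E111 x t, E110 x t, E121 x t, E120 x t, hsplit1, hinv]
    have hW := Complex.exp_ne_zero ((I*(a:ℂ)) * (x:ℂ) + (I*(2*(c:ℂ)^2-(a:ℂ)^2)) * (t:ℂ))
    generalize hgW : Complex.exp ((I*(a:ℂ)) * (x:ℂ) + (I*(2*(c:ℂ)^2-(a:ℂ)^2)) * (t:ℂ)) = W
    rw [hgW] at hW
    generalize hgE : Complex.exp (((-(I*(a:ℂ))+R)/2) * (x:ℂ) + (-(I*(2*(c:ℂ)^2-(a:ℂ)^2))/2 + R*(lam-(a:ℂ)/2)) * (t:ℂ)) = E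
    field_simp [hW, hc']
    have hWW : W * W⁻¹ = 1 := mul_inv_cancel₀ hW
    have hcc : (c:ℂ) * (c:ℂ)⁻¹ = 1 := mul_inv_cancel₀ hc'
    linear_combination ((4:ℂ)*(c:ℂ)*lam*E*k1 + (-2:ℂ)*(a:ℂ)*(c:ℂ)*E*k1 + (-4:ℂ)*I*(d:ℂ)*lam*E*n1 + (2:ℂ)*I*(a:ℂ)*(d:ℂ)*E*n1) * hR + ((4:ℂ)*(c:ℂ)^2*(d:ℂ)*R*E*n1 + (-8:ℂ)*(c:ℂ)^3*lam*E*k1 + (8:ℂ)*(c:ℂ)^3*(d:ℂ)*lam^2*R*E*W^5*n1*(c:ℂ)⁻¹^3*W⁻¹^5 + (-16:ℂ)*(c:ℂ)^4*lam^3*E*W^5*k1*(c:ℂ)⁻¹^3*W⁻¹^5 + (-4:ℂ)*(c:ℂ)^5*(d:ℂ)*R*E*W^5*n1*(c:ℂ)⁻¹^3*W⁻¹^5 + (8:ℂ)*(c:ℂ)^6*lam*E*W^5*k1*(c:ℂ)⁻¹^3*W⁻¹^5 + (-4:ℂ)*(a:ℂ)*(c:ℂ)^3*E*k1 + (-8:ℂ)*(a:ℂ)*(c:ℂ)^4*lam^2*E*W^5*k1*(c:ℂ)⁻¹^3*W⁻¹^5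 + (12:ℂ)*(a:ℂ)*(c:ℂ)^6*E*W^5*k1*(c:ℂ)⁻¹^3*W⁻¹^5 + (-2:ℂ)*(a:ℂ)^2*(d:ℂ)*R*E*n1 + (4:ℂ)*(a:ℂ)^2*(c:ℂ)*lam*E*k1 + (2:ℂ)*(a:ℂ)^3*(c:ℂ)*E*k1 + (-8:ℂ)*I*(a:ℂ)*(c:ℂ)^5*(d:ℂ)*E*W^5*n1*(c:ℂ)⁻¹^3*W⁻¹^5) * Complex.I_sq + ((-8:ℂ)*(d:ℂ)*lam^2*R*E*W^5*n1*W⁻¹^5 + (16:ℂ)*(c:ℂ)*lam^3*E*W^5*k1*W⁻¹^5 + (-8:ℂ)*(c:ℂ)*(d:ℂ)*lam^2*R*E*W^5*n1*(c:ℂ)⁻¹*W⁻¹^5 + (16:ℂ)*(c:ℂ)^2*lam^3*E*W^5*k1*(c:ℂ)⁻¹*W⁻¹^5 + (4:ℂ)*(c:ℂ)^2*(d:ℂ)*R*E*W^5*n1*W⁻¹^5 + (-8:ℂ)*(c:ℂ)^2*(d:ℂ)*lam^2*R*E*W^5*n1*(c:ℂ)⁻¹^2*W⁻¹^5 + (8:ℂ)*(c:ℂ)^3*lam*E*W^5*k1*W⁻¹^5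 + (16:ℂ)*(c:ℂ)^3*lam^3*E*W^5*k1*(c:ℂ)⁻¹^2*W⁻¹^5 + (4:ℂ)*(c:ℂ)^3*(d:ℂ)*R*E*W^5*n1*(c:ℂ)⁻¹*W⁻¹^5 + (8:ℂ)*(c:ℂ)^4*lam*E*W^5*k1*(c:ℂ)⁻¹*W⁻¹^5 + (4:ℂ)*(c:ℂ)^4*(d:ℂ)*R*E*W^5*n1*(c:ℂ)⁻¹^2*W⁻¹^5 + (8:ℂ)*(c:ℂ)^5*lam*E*W^5*k1*(c:ℂ)⁻¹^2*W⁻¹^5 + (8:ℂ)*(a:ℂ)*(c:ℂ)*lam^2*E*W^5*k1*W⁻¹^5 + (8:ℂ)*(a:ℂ)*(c:ℂ)^2*lam^2*E*W^5*k1*(c:ℂ)⁻¹*W⁻¹^5 + (-12:ℂ)*(a:ℂ)*(c:ℂ)^3*E*W^5*k1*W⁻¹^5 + (8:ℂ)*(a:ℂ)*(c:ℂ)^3*lam^2*E*W^5*k1*(c:ℂ)⁻¹^2*W⁻¹^5 + (-12:ℂ)*(a:ℂ)*(c:ℂ)^4*E*W^5*k1*(c:ℂ)⁻¹*W⁻¹^5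 + (-12:ℂ)*(a:ℂ)*(c:ℂ)^5*E*W^5*k1*(c:ℂ)⁻¹^2*W⁻¹^5 + (-16:ℂ)*I*(d:ℂ)*lam^3*E*W^5*n1*W⁻¹^5 + (-8:ℂ)*I*(c:ℂ)*lam^2*R*E*W^5*k1*W⁻¹^5 + (-16:ℂ)*I*(c:ℂ)*(d:ℂ)*lam^3*E*W^5*n1*(c:ℂ)⁻¹*W⁻¹^5 + (-8:ℂ)*I*(c:ℂ)^2*lam^2*R*E*W^5*k1*(c:ℂ)⁻¹*W⁻¹^5 + (-8:ℂ)*I*(c:ℂ)^2*(d:ℂ)*lam*E*W^5*n1*W⁻¹^5 + (-16:ℂ)*I*(c:ℂ)^2*(d:ℂ)*lam^3*E*W^5*n1*(c:ℂ)⁻¹^2*W⁻¹^5 + (4:ℂ)*I*(c:ℂ)^3*R*E*W^5*k1*W⁻¹^5 + (-8:ℂ)*I*(c:ℂ)^3*lam^2*R*E*W^5*k1*(c:ℂ)⁻¹^2*W⁻¹^5 + (-8:ℂ)*I*(c:ℂ)^3*(d:ℂ)*lam*E*W^5*n1*(c:ℂ)⁻¹*W⁻¹^5 + (4:ℂ)*I*(c:ℂ)^4*R*E*W^5*k1*(c:ℂ)⁻¹*W⁻¹^5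 + (-8:ℂ)*I*(c:ℂ)^4*(d:ℂ)*lam*E*W^5*n1*(c:ℂ)⁻¹^2*W⁻¹^5 + (4:ℂ)*I*(c:ℂ)^5*R*E*W^5*k1*(c:ℂ)⁻¹^2*W⁻¹^5 + (-8:ℂ)*I*(a:ℂ)*(d:ℂ)*lam^2*E*W^5*n1*W⁻¹^5 + (-8:ℂ)*I*(a:ℂ)*(c:ℂ)*(d:ℂ)*lam^2*E*W^5*n1*(c:ℂ)⁻¹*W⁻¹^5 + (12:ℂ)*I*(a:ℂ)*(c:ℂ)^2*(d:ℂ)*E*W^5*n1*W⁻¹^5 + (-8:ℂ)*I*(a:ℂ)*(c:ℂ)^2*(d:ℂ)*lam^2*E*W^5*n1*(c:ℂ)⁻¹^2*W⁻¹^5 + (12:ℂ)*I*(a:ℂ)*(c:ℂ)^3*(d:ℂ)*E*W^5*n1*(c:ℂ)⁻¹*W⁻¹^5 + (12:ℂ)*I*(a:ℂ)*(c:ℂ)^4*(d:ℂ)*E*W^5*n1*(c:ℂ)⁻¹^2*W⁻¹^5) * hcc + ((-8:ℂ)*(d:ℂ)*lam^2*R*E*n1 + (-8:ℂ)*(d:ℂ)*lam^2*R*E*W*n1*W⁻¹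 + (-8:ℂ)*(d:ℂ)*lam^2*R*E*W^2*n1*W⁻¹^2 + (-8:ℂ)*(d:ℂ)*lam^2*R*E*W^3*n1*W⁻¹^3 + (-8:ℂ)*(d:ℂ)*lam^2*R*E*W^4*n1*W⁻¹^4 + (16:ℂ)*(c:ℂ)*lam^3*E*k1 + (16:ℂ)*(c:ℂ)*lam^3*E*W*k1*W⁻¹ + (16:ℂ)*(c:ℂ)*lam^3*E*W^2*k1*W⁻¹^2 + (16:ℂ)*(c:ℂ)*lam^3*E*W^3*k1*W⁻¹^3 + (16:ℂ)*(c:ℂ)*lam^3*E*W^4*k1*W⁻¹^4 + (4:ℂ)*(c:ℂ)^2*(d:ℂ)*R*E*n1 + (4:ℂ)*(c:ℂ)^2*(d:ℂ)*R*E*W*n1*W⁻¹ + (4:ℂ)*(c:ℂ)^2*(d:ℂ)*R*E*W^2*n1*W⁻¹^2 + (4:ℂ)*(c:ℂ)^2*(d:ℂ)*R*E*W^3*n1*W⁻¹^3 + (4:ℂ)*(c:ℂ)^2*(d:ℂ)*R*E*W^4*n1*W⁻¹^4 + (8:ℂ)*(c:ℂ)^3*lam*E*k1 + (8:ℂ)*(c:ℂ)^3*lam*E*W*k1*W⁻¹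 + (8:ℂ)*(c:ℂ)^3*lam*E*W^2*k1*W⁻¹^2 + (8:ℂ)*(c:ℂ)^3*lam*E*W^3*k1*W⁻¹^3 + (8:ℂ)*(c:ℂ)^3*lam*E*W^4*k1*W⁻¹^4 + (8:ℂ)*(a:ℂ)*(c:ℂ)*lam^2*E*k1 + (8:ℂ)*(a:ℂ)*(c:ℂ)*lam^2*E*W*k1*W⁻¹ + (8:ℂ)*(a:ℂ)*(c:ℂ)*lam^2*E*W^2*k1*W⁻¹^2 + (8:ℂ)*(a:ℂ)*(c:ℂ)*lam^2*E*W^3*k1*W⁻¹^3 + (8:ℂ)*(a:ℂ)*(c:ℂ)*lam^2*E*W^4*k1*W⁻¹^4 + (-12:ℂ)*(a:ℂ)*(c:ℂ)^3*E*k1 + (-12:ℂ)*(a:ℂ)*(c:ℂ)^3*E*W*k1*W⁻¹ + (-12:ℂ)*(a:ℂ)*(c:ℂ)^3*E*W^2*k1*W⁻¹^2 + (-12:ℂ)*(a:ℂ)*(c:ℂ)^3*E*W^3*k1*W⁻¹^3 + (-12:ℂ)*(a:ℂ)*(c:ℂ)^3*E*W^4*k1*W⁻¹^4 + (-16:ℂ)*I*(d:ℂ)*lam^3*E*n1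 + (-16:ℂ)*I*(d:ℂ)*lam^3*E*W*n1*W⁻¹ + (-16:ℂ)*I*(d:ℂ)*lam^3*E*W^2*n1*W⁻¹^2 + (-16:ℂ)*I*(d:ℂ)*lam^3*E*W^3*n1*W⁻¹^3 + (-16:ℂ)*I*(d:ℂ)*lam^3*E*W^4*n1*W⁻¹^4 + (-8:ℂ)*I*(c:ℂ)*lam^2*R*E*k1 + (-8:ℂ)*I*(c:ℂ)*lam^2*R*E*W*k1*W⁻¹ + (-8:ℂ)*I*(c:ℂ)*lam^2*R*E*W^2*k1*W⁻¹^2 + (-8:ℂ)*I*(c:ℂ)*lam^2*R*E*W^3*k1*W⁻¹^3 + (-8:ℂ)*I*(c:ℂ)*lam^2*R*E*W^4*k1*W⁻¹^4 + (-8:ℂ)*I*(c:ℂ)^2*(d:ℂ)*lam*E*n1 + (-8:ℂ)*I*(c:ℂ)^2*(d:ℂ)*lam*E*W*n1*W⁻¹ + (-8:ℂ)*I*(c:ℂ)^2*(d:ℂ)*lam*E*W^2*n1*W⁻¹^2 + (-8:ℂ)*I*(c:ℂ)^2*(d:ℂ)*lam*E*W^3*n1*W⁻¹^3 + (-8:ℂ)*I*(c:ℂ)^2*(d:ℂ)*lam*E*W^4*n1*W⁻¹^4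 + (4:ℂ)*I*(c:ℂ)^3*R*E*k1 + (4:ℂ)*I*(c:ℂ)^3*R*E*W*k1*W⁻¹ + (4:ℂ)*I*(c:ℂ)^3*R*E*W^2*k1*W⁻¹^2 + (4:ℂ)*I*(c:ℂ)^3*R*E*W^3*k1*W⁻¹^3 + (4:ℂ)*I*(c:ℂ)^3*R*E*W^4*k1*W⁻¹^4 + (-8:ℂ)*I*(a:ℂ)*(d:ℂ)*lam^2*E*n1 + (-8:ℂ)*I*(a:ℂ)*(d:ℂ)*lam^2*E*W*n1*W⁻¹ + (-8:ℂ)*I*(a:ℂ)*(d:ℂ)*lam^2*E*W^2*n1*W⁻¹^2 + (-8:ℂ)*I*(a:ℂ)*(d:ℂ)*lam^2*E*W^3*n1*W⁻¹^3 + (-8:ℂ)*I*(a:ℂ)*(d:ℂ)*lam^2*E*W^4*n1*W⁻¹^4 + (12:ℂ)*I*(a:ℂ)*(c:ℂ)^2*(d:ℂ)*E*n1 + (12:ℂ)*I*(a:ℂ)*(c:ℂ)^2*(d:ℂ)*E*W*n1*W⁻¹ + (12:ℂ)*I*(a:ℂ)*(c:ℂ)^2*(d:ℂ)*E*W^2*n1*W⁻¹^2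 + (12:ℂ)*I*(a:ℂ)*(c:ℂ)^2*(d:ℂ)*E*W^3*n1*W⁻¹^3 + (12:ℂ)*I*(a:ℂ)*(c:ℂ)^2*(d:ℂ)*E*W^4*n1*W⁻¹^4) * hWW + ((-1:ℂ)*I*(a:ℂ)*(d:ℂ)*n1*E + (2:ℂ)*I*(d:ℂ)*lam*n1*E + (1:ℂ)*(a:ℂ)*(c:ℂ)*k1*E + (-2:ℂ)*(c:ℂ)*lam*k1*E) * hR + ((-4:ℂ)*(a:ℂ)*(c:ℂ)*lam^2*k1*E + (-2:ℂ)*(a:ℂ)^2*(c:ℂ)*lam*k1*E + (-1:ℂ)*(a:ℂ)^3*(c:ℂ)*k1*E + (-8:ℂ)*(c:ℂ)*lam^3*k1*E + (-4:ℂ)*(c:ℂ)^2*(d:ℂ)*R*n1*E + (8:ℂ)*(a:ℂ)*(c:ℂ)^3*k1*E + (-8:ℂ)*(c:ℂ)^3*(d:ℂ)*lam^2*R*n1*E*W^5*(c:ℂ)⁻¹^3*W⁻¹^5 + (8:ℂ)*(c:ℂ)^3*lam*k1*E + (8:ℂ)*(a:ℂ)*(c:ℂ)^4*lam^2*k1*E*W^5*(c:ℂ)⁻¹^3*W⁻¹^5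 + (16:ℂ)*(c:ℂ)^4*lam^3*k1*E*W^5*(c:ℂ)⁻¹^3*W⁻¹^5 + (4:ℂ)*(c:ℂ)^5*(d:ℂ)*R*n1*E*W^5*(c:ℂ)⁻¹^3*W⁻¹^5 + (-12:ℂ)*(a:ℂ)*(c:ℂ)^6*k1*E*W^5*(c:ℂ)⁻¹^3*W⁻¹^5 + (-8:ℂ)*(c:ℂ)^6*lam*k1*E*W^5*(c:ℂ)⁻¹^3*W⁻¹^5 + (1:ℂ)*(a:ℂ)^2*(d:ℂ)*R*n1*E + (4:ℂ)*(d:ℂ)*lam^2*R*n1*E + (-4:ℂ)*I*(a:ℂ)*(c:ℂ)^2*(d:ℂ)*n1*E + (8:ℂ)*I*(a:ℂ)*(c:ℂ)^5*(d:ℂ)*n1*E*W^5*(c:ℂ)⁻¹^3*W⁻¹^5) * Complex.I_sq + ((8:ℂ)*I*(a:ℂ)*(c:ℂ)^2*(d:ℂ)*lam^2*n1*E*W^5*(c:ℂ)⁻¹^2*W⁻¹^5 + (16:ℂ)*I*(c:ℂ)^2*(d:ℂ)*lam^3*n1*E*W^5*(c:ℂ)⁻¹^2*W⁻¹^5 +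 (8:ℂ)*I*(c:ℂ)^3*lam^2*R*k1*E*W^5*(c:ℂ)⁻¹^2*W⁻¹^5 + (-12:ℂ)*I*(a:ℂ)*(c:ℂ)^4*(d:ℂ)*n1*E*W^5*(c:ℂ)⁻¹^2*W⁻¹^5 + (8:ℂ)*I*(c:ℂ)^4*(d:ℂ)*lam*n1*E*W^5*(c:ℂ)⁻¹^2*W⁻¹^5 + (-4:ℂ)*I*(c:ℂ)^5*R*k1*E*W^5*(c:ℂ)⁻¹^2*W⁻¹^5 + (-8:ℂ)*(c:ℂ)^5*lam*k1*E*W^5*(c:ℂ)⁻¹^2*W⁻¹^5 + (8:ℂ)*I*(a:ℂ)*(c:ℂ)*(d:ℂ)*lam^2*n1*E*W^5*(c:ℂ)⁻¹*W⁻¹^5 + (16:ℂ)*I*(c:ℂ)*(d:ℂ)*lam^3*n1*E*W^5*(c:ℂ)⁻¹*W⁻¹^5 + (8:ℂ)*I*(c:ℂ)^2*lam^2*R*k1*E*W^5*(c:ℂ)⁻¹*W⁻¹^5 + (-12:ℂ)*I*(a:ℂ)*(c:ℂ)^3*(d:ℂ)*n1*E*W^5*(c:ℂ)⁻¹*W⁻¹^5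 + (8:ℂ)*I*(c:ℂ)^3*(d:ℂ)*lam*n1*E*W^5*(c:ℂ)⁻¹*W⁻¹^5 + (-4:ℂ)*I*(c:ℂ)^4*R*k1*E*W^5*(c:ℂ)⁻¹*W⁻¹^5 + (8:ℂ)*(c:ℂ)^2*(d:ℂ)*lam^2*R*n1*E*W^5*(c:ℂ)⁻¹^2*W⁻¹^5 + (-8:ℂ)*(a:ℂ)*(c:ℂ)^3*lam^2*k1*E*W^5*(c:ℂ)⁻¹^2*W⁻¹^5 + (-16:ℂ)*(c:ℂ)^3*lam^3*k1*E*W^5*(c:ℂ)⁻¹^2*W⁻¹^5 + (-4:ℂ)*(c:ℂ)^4*(d:ℂ)*R*n1*E*W^5*(c:ℂ)⁻¹^2*W⁻¹^5 + (12:ℂ)*(a:ℂ)*(c:ℂ)^5*k1*E*W^5*(c:ℂ)⁻¹^2*W⁻¹^5 + (-8:ℂ)*(c:ℂ)^4*lam*k1*E*W^5*(c:ℂ)⁻¹*W⁻¹^5 + (8:ℂ)*I*(a:ℂ)*(d:ℂ)*lam^2*n1*E*W^5*W⁻¹^5 + (16:ℂ)*I*(d:ℂ)*lam^3*n1*E*W^5*W⁻¹^5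 + (8:ℂ)*I*(c:ℂ)*lam^2*R*k1*E*W^5*W⁻¹^5 + (-12:ℂ)*I*(a:ℂ)*(c:ℂ)^2*(d:ℂ)*n1*E*W^5*W⁻¹^5 + (8:ℂ)*I*(c:ℂ)^2*(d:ℂ)*lam*n1*E*W^5*W⁻¹^5 + (-4:ℂ)*I*(c:ℂ)^3*R*k1*E*W^5*W⁻¹^5 + (8:ℂ)*(c:ℂ)*(d:ℂ)*lam^2*R*n1*E*W^5*(c:ℂ)⁻¹*W⁻¹^5 + (-8:ℂ)*(a:ℂ)*(c:ℂ)^2*lam^2*k1*E*W^5*(c:ℂ)⁻¹*W⁻¹^5 + (-16:ℂ)*(c:ℂ)^2*lam^3*k1*E*W^5*(c:ℂ)⁻¹*W⁻¹^5 + (-4:ℂ)*(c:ℂ)^3*(d:ℂ)*R*n1*E*W^5*(c:ℂ)⁻¹*W⁻¹^5 + (12:ℂ)*(a:ℂ)*(c:ℂ)^4*k1*E*W^5*(c:ℂ)⁻¹*W⁻¹^5 + (-8:ℂ)*(c:ℂ)^3*lam*k1*E*W^5*W⁻¹^5 + (8:ℂ)*(d:ℂ)*lam^2*R*n1*E*W^5*W⁻¹^5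 + (-8:ℂ)*(a:ℂ)*(c:ℂ)*lam^2*k1*E*W^5*W⁻¹^5 + (-16:ℂ)*(c:ℂ)*lam^3*k1*E*W^5*W⁻¹^5 + (-4:ℂ)*(c:ℂ)^2*(d:ℂ)*R*n1*E*W^5*W⁻¹^5 + (12:ℂ)*(a:ℂ)*(c:ℂ)^3*k1*E*W^5*W⁻¹^5) * hcc + ((8:ℂ)*I*(a:ℂ)*(d:ℂ)*lam^2*n1*E*W^4*W⁻¹^4 + (16:ℂ)*I*(d:ℂ)*lam^3*n1*E*W^4*W⁻¹^4 + (8:ℂ)*I*(c:ℂ)*lam^2*R*k1*E*W^4*W⁻¹^4 + (-12:ℂ)*I*(a:ℂ)*(c:ℂ)^2*(d:ℂ)*n1*E*W^4*W⁻¹^4 + (8:ℂ)*I*(c:ℂ)^2*(d:ℂ)*lam*n1*E*W^4*W⁻¹^4 + (-4:ℂ)*I*(c:ℂ)^3*R*k1*E*W^4*W⁻¹^4 + (-8:ℂ)*(c:ℂ)^3*lam*k1*E*W^4*W⁻¹^4 + (8:ℂ)*I*(a:ℂ)*(d:ℂ)*lam^2*n1*E*W^3*W⁻¹^3 + (16:ℂ)*I*(d:ℂ)*lam^3*n1*E*W^3*W⁻¹^3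 + (8:ℂ)*I*(c:ℂ)*lam^2*R*k1*E*W^3*W⁻¹^3 + (-12:ℂ)*I*(a:ℂ)*(c:ℂ)^2*(d:ℂ)*n1*E*W^3*W⁻¹^3 + (8:ℂ)*I*(c:ℂ)^2*(d:ℂ)*lam*n1*E*W^3*W⁻¹^3 + (-4:ℂ)*I*(c:ℂ)^3*R*k1*E*W^3*W⁻¹^3 + (8:ℂ)*(d:ℂ)*lam^2*R*n1*E*W^4*W⁻¹^4 + (-8:ℂ)*(a:ℂ)*(c:ℂ)*lam^2*k1*E*W^4*W⁻¹^4 + (-16:ℂ)*(c:ℂ)*lam^3*k1*E*W^4*W⁻¹^4 + (-4:ℂ)*(c:ℂ)^2*(d:ℂ)*R*n1*E*W^4*W⁻¹^4 + (12:ℂ)*(a:ℂ)*(c:ℂ)^3*k1*E*W^4*W⁻¹^4 + (-8:ℂ)*(c:ℂ)^3*lam*k1*E*W^3*W⁻¹^3 + (8:ℂ)*I*(a:ℂ)*(d:ℂ)*lam^2*n1*E*W^2*W⁻¹^2 + (16:ℂ)*I*(d:ℂ)*lam^3*n1*E*W^2*W⁻¹^2 + (8:ℂ)*I*(c:ℂ)*lam^2*R*k1*E*W^2*W⁻¹^2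 + (-12:ℂ)*I*(a:ℂ)*(c:ℂ)^2*(d:ℂ)*n1*E*W^2*W⁻¹^2 + (8:ℂ)*I*(c:ℂ)^2*(d:ℂ)*lam*n1*E*W^2*W⁻¹^2 + (-4:ℂ)*I*(c:ℂ)^3*R*k1*E*W^2*W⁻¹^2 + (8:ℂ)*(d:ℂ)*lam^2*R*n1*E*W^3*W⁻¹^3 + (-8:ℂ)*(a:ℂ)*(c:ℂ)*lam^2*k1*E*W^3*W⁻¹^3 + (-16:ℂ)*(c:ℂ)*lam^3*k1*E*W^3*W⁻¹^3 + (-4:ℂ)*(c:ℂ)^2*(d:ℂ)*R*n1*E*W^3*W⁻¹^3 + (12:ℂ)*(a:ℂ)*(c:ℂ)^3*k1*E*W^3*W⁻¹^3 + (-8:ℂ)*(c:ℂ)^3*lam*k1*E*W^2*W⁻¹^2 + (8:ℂ)*I*(a:ℂ)*(d:ℂ)*lam^2*n1*E*W*W⁻¹ + (16:ℂ)*I*(d:ℂ)*lam^3*n1*E*W*W⁻¹ + (8:ℂ)*I*(c:ℂ)*lam^2*R*k1*E*W*W⁻¹ + (-12:ℂ)*I*(a:ℂ)*(c:ℂ)^2*(d:ℂ)*n1*E*W*W⁻¹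 + (8:ℂ)*I*(c:ℂ)^2*(d:ℂ)*lam*n1*E*W*W⁻¹ + (-4:ℂ)*I*(c:ℂ)^3*R*k1*E*W*W⁻¹ + (8:ℂ)*(d:ℂ)*lam^2*R*n1*E*W^2*W⁻¹^2 + (-8:ℂ)*(a:ℂ)*(c:ℂ)*lam^2*k1*E*W^2*W⁻¹^2 + (-16:ℂ)*(c:ℂ)*lam^3*k1*E*W^2*W⁻¹^2 + (-4:ℂ)*(c:ℂ)^2*(d:ℂ)*R*n1*E*W^2*W⁻¹^2 + (12:ℂ)*(a:ℂ)*(c:ℂ)^3*k1*E*W^2*W⁻¹^2 + (-8:ℂ)*(c:ℂ)^3*lam*k1*E*W*W⁻¹ + (8:ℂ)*I*(a:ℂ)*(d:ℂ)*lam^2*n1*E + (16:ℂ)*I*(d:ℂ)*lam^3*n1*E + (8:ℂ)*I*(c:ℂ)*lam^2*R*k1*E + (-12:ℂ)*I*(a:ℂ)*(c:ℂ)^2*(d:ℂ)*n1*E + (8:ℂ)*I*(c:ℂ)^2*(d:ℂ)*lam*n1*E + (-4:ℂ)*I*(c:ℂ)^3*R*k1*E + (8:ℂ)*(d:ℂ)*lam^2*R*n1*E*W*W⁻¹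 + (-8:ℂ)*(a:ℂ)*(c:ℂ)*lam^2*k1*E*W*W⁻¹ + (-16:ℂ)*(c:ℂ)*lam^3*k1*E*W*W⁻¹ + (-4:ℂ)*(c:ℂ)^2*(d:ℂ)*R*n1*E*W*W⁻¹ + (12:ℂ)*(a:ℂ)*(c:ℂ)^3*k1*E*W*W⁻¹ + (-8:ℂ)*(c:ℂ)^3*lam*k1*E + (8:ℂ)*(d:ℂ)*lam^2*R*n1*E + (-8:ℂ)*(a:ℂ)*(c:ℂ)*lam^2*k1*E + (-16:ℂ)*(c:ℂ)*lam^3*k1*E + (-4:ℂ)*(c:ℂ)^2*(d:ℂ)*R*n1*E + (12:ℂ)*(a:ℂ)*(c:ℂ)^3*k1*E) * hWW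
end

section
/- Let a, c, d ∈ ℝ with c ≠ 0, set b = 2c² − a², ρ = ax + bt, q = c·e^{iρ}, r = i·d·e^{iρ}. Let λ₁ ∈ ℂ and let R ∈ ℂ satisfy R² = −a² − 4aλ₁ − 4c² − 4λ₁². For a choice of square root S and spectral value μ, write ψ110(S,μ), ψ111(S,μ), ψ120(S,μ), ψ121(S,μ) for the explicit eigenfunctions n₁·e^{iρ/2 + S(x/2+(μ−a/2)t)}, k₁·e^{iρ/2 + S(x/2+(μ−a/2)t)}, ((ai + 2iμ + S)n₁/(2c))·e^{−iρ/2 + S(x/2+(μ−a/2)t)}, (((aci + 2ciμ + Sc)k₁ + (ad + 2dμ − iSd)n₁)/(2c²))·e^{−iρ/2 + S(x/2+(μ−a/2)t)}, with fixed constants n₁, k₁ ∈ ℂ. Then the quadruple defined by φ110 = ψ110(R,λ₁) + ψ110(−R,λ₁) − conj(ψ120(conj(R), conj(λ₁))) − conj(ψ120(−conj(R), conj(λ₁))), φ111 = ψ111(R,λ₁) + ψ111(−R,λ₁) − conj(ψ121(conj(R), conj(λ₁))) − conj(ψ121(−conj(R), conj(λ₁))), φ120 = ψ120(R,λ₁)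 + ψ120(−R,λ₁) + conj(ψ110(conj(R), conj(λ₁))) + conj(ψ110(−conj(R), conj(λ₁))), φ121 = ψ121(R,λ₁) + ψ121(−R,λ₁) + conj(ψ111(conj(R), conj(λ₁))) + conj(ψ111(−conj(R), conj(λ₁))) is a solution of the Lax system of the Frobenius NLS equation at spectral parameter λ₁ for the potentials (q,r). -/
open Complex

private lemma hasDerivAt_Cexp (C u w : ℂ) (x : ℝ) :
    HasDerivAt (fun y : ℝ => C * Complex.exp (u * y + w)) (u * (C * Complex.exp (u * x + w))) x := by
  have h : HasDerivAt (fun z : ℂ => C * Complex.exp (u * z + w))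
      (u * (C * Complex.exp (u * (x:ℂ) + w))) (x:ℂ) := by
    have h0 := (((hasDerivAt_id ((x:ℂ))).const_mul u).add_const w).cexp.const_mul C
    simp only [id_eq] at h0
    exact h0.congr_deriv (by ring)
  exact h.comp_ofReal

private lemma hasDerivAt_xexp (C S β ε : ℂ) (a b t : ℝ) (x : ℝ) :
    HasDerivAt (fun x' : ℝ => C * Complex.exp (ε * ((a:ℂ) * x' + (b:ℂ) * t) / 2 + S * ((x':ℂ) / 2 + β * (t:ℂ))))
      ((ε * (a:ℂ) / 2 + S / 2) * (C * Complex.exp (ε * ((a:ℂ) * x + (b:ℂ) * t) / 2 + S * ((x:ℂ) / 2 + β * (t:ℂ))))) x := by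
  have h := hasDerivAt_Cexp C (ε * (a:ℂ) / 2 + S / 2) ((ε * (b:ℂ) / 2 + S * β) * (t:ℂ)) x
  have e : (fun x' : ℝ => C * Complex.exp (ε * ((a:ℂ) * x' + (b:ℂ) * t) / 2 + S * ((x':ℂ) / 2 + β * (t:ℂ))))
      = (fun x' : ℝ => C * Complex.exp ((ε * (a:ℂ) / 2 + S / 2) * (x':ℂ) + (ε * (b:ℂ) / 2 + S * β) * (t:ℂ))) := by
    funext y
    exact congrArg (fun z => C * Complex.exp z) (by ring)
  rw [e]
  exact h.congr_deriv (congrArg (fun z => (ε * (a:ℂ) / 2 + S / 2) * (C * Complex.exp z)) (by ring))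

private lemma hasDerivAt_texp (C S β ε : ℂ) (a b x : ℝ) (t : ℝ) :
    HasDerivAt (fun t' : ℝ => C * Complex.exp (ε * ((a:ℂ) * x + (b:ℂ) * t') / 2 + S * ((x:ℂ) / 2 + β * (t':ℂ))))
      ((ε * (b:ℂ) / 2 + S * β) * (C * Complex.exp (ε * ((a:ℂ) * x + (b:ℂ) * t) / 2 + S * ((x:ℂ) / 2 + β * (t:ℂ))))) t := by
  have h := hasDerivAt_Cexp C (ε * (b:ℂ) / 2 + S * β) (ε * (a:ℂ) * (x:ℂ) / 2 + S * (x:ℂ) / 2) t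
  have e : (fun t' : ℝ => C * Complex.exp (ε * ((a:ℂ) * x + (b:ℂ) * t') / 2 + S * ((x:ℂ) / 2 + β * (t':ℂ))))
      = (fun t' : ℝ => C * Complex.exp ((ε * (b:ℂ) / 2 + S * β) * (t':ℂ) + (ε * (a:ℂ) * (x:ℂ) / 2 + S * (x:ℂ) / 2))) := by
    funext y
    exact congrArg (fun z => C * Complex.exp z) (by ring)
  rw [e]
  exact h.congr_deriv (congrArg (fun z => (ε * (b:ℂ) / 2 + S * β) * (C * Complex.exp z)) (by ring))

private lemma hasDerivAt_qexp (C ε : ℂ) (a b t : ℝ) (x : ℝ) :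
    HasDerivAt (fun x' : ℝ => C * Complex.exp (ε * ((a:ℂ) * x' + (b:ℂ) * t)))
      ((ε * (a:ℂ)) * (C * Complex.exp (ε * ((a:ℂ) * x + (b:ℂ) * t)))) x := by
  have h := hasDerivAt_Cexp C (ε * (a:ℂ)) (ε * (b:ℂ) * (t:ℂ)) x
  have e : (fun x' : ℝ => C * Complex.exp (ε * ((a:ℂ) * x' + (b:ℂ) * t)))
      = (fun x' : ℝ => C * Complex.exp ((ε * (a:ℂ)) * (x':ℂ) + ε * (b:ℂ) * (t:ℂ))) := by
    funext y
    exact congrArg (fun z => C * Complex.exp z) (by ring)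
  rw [e]
  exact h.congr_deriv (congrArg (fun z => (ε * (a:ℂ)) * (C * Complex.exp z)) (by ring))

/-- The Lax system with derivatives recorded via `HasDerivAt`. -/
def Sol (q r : ℝ → ℝ → ℂ) (lam : ℂ) (p110 p111 p120 p121 : ℝ → ℝ → ℂ) : Prop :=
  ∀ x t : ℝ,
    HasDerivAt (fun x' => p110 x' t) (-I * lam * p110 x t + q x t * p120 x t) x ∧
    HasDerivAt (fun x' => p111 x' t) (-I * lam * p111 x t + q x t * p121 x t + r x t * p120 x t) x ∧
    HasDerivAt (fun x' => p120 x' t) (I * lam * p120 x t - (starRingEnd ℂ) (q x t) * p110 x t) x ∧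
    HasDerivAt (fun x' => p121 x' t) (I * lam * p121 x t - (starRingEnd ℂ) (q x t) * p111 x t
      - (starRingEnd ℂ) (r x t) * p110 x t) x ∧
    HasDerivAt (fun t' => p110 x t') ((-2 * I * lam ^ 2 + I * q x t * (starRingEnd ℂ) (q x t)) * p110 x t
      + (2 * q x t * lam + I * pX q x t) * p120 x t) t ∧
    HasDerivAt (fun t' => p111 x t') ((-2 * I * lam ^ 2 + I * q x t * (starRingEnd ℂ) (q x t)) * p111 x t
      + I * ((starRingEnd ℂ) (q x t) * r x t + q x t * (starRingEnd ℂ) (r x t)) * p110 x t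
      + (2 * q x t * lam + I * pX q x t) * p121 x t
      + (2 * r x t * lam + I * pX r x t) * p120 x t) t ∧
    HasDerivAt (fun t' => p120 x t') ((-2 * (starRingEnd ℂ) (q x t) * lam
        + I * pX (fun x' t' => (starRingEnd ℂ) (q x' t')) x t) * p110 x t
      + (2 * I * lam ^ 2 - I * q x t * (starRingEnd ℂ) (q x t)) * p120 x t) t ∧
    HasDerivAt (fun t' => p121 x t') ((-2 * (starRingEnd ℂ) (q x t) * lam
        + I * pX (fun x' t' => (starRingEnd ℂ) (q x' t')) x t) * p111 x t
      + (-2 * (starRingEnd ℂ) (r x t) * lam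
        + I * pX (fun x' t' => (starRingEnd ℂ) (r x' t')) x t) * p110 x t
      + (2 * I * lam ^ 2 - I * q x t * (starRingEnd ℂ) (q x t)) * p121 x t
      - I * ((starRingEnd ℂ) (q x t) * r x t + q x t * (starRingEnd ℂ) (r x t)) * p120 x t) t

lemma Sol.lax {q r : ℝ → ℝ → ℂ} {lam : ℂ} {p110 p111 p120 p121 : ℝ → ℝ → ℂ}
    (h : Sol q r lam p110 p111 p120 p121) :
    FrobeniusLaxSolution q r lam p110 p111 p120 p121 := by
  intro x t
  obtain ⟨h1, h2, h3, h4, h5, h6, h7, h8⟩ := h x t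
  exact ⟨h1.deriv, h2.deriv, h3.deriv, h4.deriv, h5.deriv, h6.deriv, h7.deriv, h8.deriv⟩

lemma Sol.add {q r : ℝ → ℝ → ℂ} {lam : ℂ} {p110 p111 p120 p121 s110 s111 s120 s121 : ℝ → ℝ → ℂ}
    (h : Sol q r lam p110 p111 p120 p121) (h' : Sol q r lam s110 s111 s120 s121) :
    Sol q r lam (fun x t => p110 x t + s110 x t) (fun x t => p111 x t + s111 x t)
      (fun x t => p120 x t + s120 x t) (fun x t => p121 x t + s121 x t) := by
  intro x t
  obtain ⟨h1, h2, h3, h4, h5, h6, h7, h8⟩ := h x t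
  obtain ⟨g1, g2, g3, g4, g5, g6, g7, g8⟩ := h' x t
  exact ⟨(h1.add g1).congr_deriv (by ring), (h2.add g2).congr_deriv (by ring),
    (h3.add g3).congr_deriv (by ring), (h4.add g4).congr_deriv (by ring),
    (h5.add g5).congr_deriv (by ring), (h6.add g6).congr_deriv (by ring),
    (h7.add g7).congr_deriv (by ring), (h8.add g8).congr_deriv (by ring)⟩

lemma Sol.congrFns {q r : ℝ → ℝ → ℂ} {lam : ℂ} {p110 p111 p120 p121 s110 s111 s120 s121 : ℝ → ℝ → ℂ}
    (h : Sol q r lam p110 p111 p120 p121)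
    (e110 : ∀ x t, s110 x t = p110 x t) (e111 : ∀ x t, s111 x t = p111 x t)
    (e120 : ∀ x t, s120 x t = p120 x t) (e121 : ∀ x t, s121 x t = p121 x t) :
    Sol q r lam s110 s111 s120 s121 := by
  have E110 : s110 = p110 := funext fun x => funext fun t => e110 x t
  have E111 : s111 = p111 := funext fun x => funext fun t => e111 x t
  have E120 : s120 = p120 := funext fun x => funext fun t => e120 x t
  have E121 : s121 = p121 := funext fun x => funext fun t => e121 x t
  rw [E110, E111, E120, E121]
  exact h

lemma Sol.conjFlip {q r : ℝ → ℝ → ℂ} {lam : ℂ} {p110 p111 p120 p121 : ℝ → ℝ → ℂ}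
    (hq2 : ∀ x t, pX (fun x' t' => (starRingEnd ℂ) (q x' t')) x t = (starRingEnd ℂ) (pX q x t))
    (hr2 : ∀ x t, pX (fun x' t' => (starRingEnd ℂ) (r x' t')) x t = (starRingEnd ℂ) (pX r x t))
    (h : Sol q r ((starRingEnd ℂ) lam) p110 p111 p120 p121) :
    Sol q r lam (fun x t => -((starRingEnd ℂ) (p120 x t))) (fun x t => -((starRingEnd ℂ) (p121 x t)))
      (fun x t => (starRingEnd ℂ) (p110 x t)) (fun x t => (starRingEnd ℂ) (p111 x t)) := by
  intro x t
  obtain ⟨h1, h2, h3, h4, h5, h6, h7, h8⟩ := h x t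
  refine ⟨(h3.star.neg).congr_deriv ?_, (h4.star.neg).congr_deriv ?_,
    (h1.star).congr_deriv ?_, (h2.star).congr_deriv ?_,
    (h7.star.neg).congr_deriv ?_, (h8.star.neg).congr_deriv ?_,
    (h5.star).congr_deriv ?_, (h6.star).congr_deriv ?_⟩ <;>
  · simp only [← starRingEnd_apply, hq2, hr2, map_add, map_sub, map_mul, map_neg, map_pow,
      Complex.conj_conj, Complex.conj_I, map_ofNat]
    ring

lemma sol_base (a b c d : ℝ) (hc : c ≠ 0) (hb : b = 2 * c ^ 2 - a ^ 2) (μ S n1 k1 : ℂ)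
    (hS : S ^ 2 = -(a:ℂ) ^ 2 - 4 * (a:ℂ) * μ - 4 * (c:ℂ) ^ 2 - 4 * μ ^ 2)
    (q r : ℝ → ℝ → ℂ)
    (hq : ∀ x t : ℝ, q x t = (c:ℂ) * Complex.exp (I * ((a:ℂ) * (x:ℂ) + (b:ℂ) * (t:ℂ))))
    (hr : ∀ x t : ℝ, r x t = I * (d:ℂ) * Complex.exp (I * ((a:ℂ) * (x:ℂ) + (b:ℂ) * (t:ℂ)))) :
    Sol q r μ
      (fun x t => n1 * Complex.exp (I * ((a:ℂ) * (x:ℂ) + (b:ℂ) * (t:ℂ)) / 2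
        + S * ((x:ℂ) / 2 + (μ - (a:ℂ) / 2) * (t:ℂ))))
      (fun x t => k1 * Complex.exp (I * ((a:ℂ) * (x:ℂ) + (b:ℂ) * (t:ℂ)) / 2
        + S * ((x:ℂ) / 2 + (μ - (a:ℂ) / 2) * (t:ℂ))))
      (fun x t => ((a:ℂ) * I + 2 * I * μ + S) * n1 / (2 * (c:ℂ))
        * Complex.exp (-I * ((a:ℂ) * (x:ℂ) + (b:ℂ) * (t:ℂ)) / 2
        + S * ((x:ℂ) / 2 + (μ - (a:ℂ) / 2) * (t:ℂ))))
      (fun x t => (((a:ℂ) * (c:ℂ) * I + 2 * (c:ℂ) * I * μ + S * (c:ℂ)) * k1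
          + ((a:ℂ) * (d:ℂ) + 2 * (d:ℂ) * μ - I * S * (d:ℂ)) * n1) / (2 * (c:ℂ) ^ 2)
        * Complex.exp (-I * ((a:ℂ) * (x:ℂ) + (b:ℂ) * (t:ℂ)) / 2
        + S * ((x:ℂ) / 2 + (μ - (a:ℂ) / 2) * (t:ℂ)))) := by
  intro x t
  have hcC : (c:ℂ) ≠ 0 := Complex.ofReal_ne_zero.mpr hc
  have h2c2 : (2 * (c:ℂ) ^ 2) ≠ 0 := mul_ne_zero two_ne_zero (pow_ne_zero 2 hcC)
  have hbC : (b:ℂ) = 2 * (c:ℂ) ^ 2 - (a:ℂ) ^ 2 := by rw [hb]; push_cast; ring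
  have hqcAll : ∀ y s : ℝ, (starRingEnd ℂ) (q y s)
      = (c:ℂ) * Complex.exp (-I * ((a:ℂ) * (y:ℂ) + (b:ℂ) * (s:ℂ))) := by
    intro y s
    rw [hq, map_mul, Complex.conj_ofReal, ← Complex.exp_conj]
    exact congrArg (fun z => (c:ℂ) * Complex.exp z)
      (by simp only [map_mul, map_add, Complex.conj_ofReal, Complex.conj_I]; try ring)
  have hrcAll : ∀ y s : ℝ, (starRingEnd ℂ) (r y s)
      = -(I * (d:ℂ)) * Complex.exp (-I * ((a:ℂ) * (y:ℂ) + (b:ℂ) * (s:ℂ))) := by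
    intro y s
    rw [hr, map_mul, map_mul, Complex.conj_ofReal, Complex.conj_I, ← Complex.exp_conj]
    rw [show -I * (d:ℂ) * Complex.exp ((starRingEnd ℂ) (I * ((a:ℂ) * (y:ℂ) + (b:ℂ) * (s:ℂ))))
      = -(I * (d:ℂ)) * Complex.exp ((starRingEnd ℂ) (I * ((a:ℂ) * (y:ℂ) + (b:ℂ) * (s:ℂ)))) from by ring]
    exact congrArg (fun z => -(I * (d:ℂ)) * Complex.exp z)
      (by simp only [map_mul, map_add, Complex.conj_ofReal, Complex.conj_I]; try ring)
  have hqc := hqcAll x t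
  have hrc := hrcAll x t
  have hpxq : pX q x t = (I * (a:ℂ)) * ((c:ℂ) * Complex.exp (I * ((a:ℂ) * (x:ℂ) + (b:ℂ) * (t:ℂ)))) := by
    have e : (fun x' : ℝ => q x' t)
        = fun x' : ℝ => (c:ℂ) * Complex.exp (I * ((a:ℂ) * (x':ℂ) + (b:ℂ) * (t:ℂ))) :=
      funext fun y => hq y t
    show deriv (fun x' => q x' t) x = _
    rw [e, (hasDerivAt_qexp (c:ℂ) I a b t x).deriv]
  have hpxr : pX r x t = (I * (a:ℂ)) * (I * (d:ℂ) * Complex.exp (I * ((a:ℂ) * (x:ℂ) + (b:ℂ) * (t:ℂ)))) := by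
    have e : (fun x' : ℝ => r x' t)
        = fun x' : ℝ => I * (d:ℂ) * Complex.exp (I * ((a:ℂ) * (x':ℂ) + (b:ℂ) * (t:ℂ))) :=
      funext fun y => hr y t
    show deriv (fun x' => r x' t) x = _
    rw [e, (hasDerivAt_qexp (I * (d:ℂ)) I a b t x).deriv]
  have hpxqc : pX (fun x' t' => (starRingEnd ℂ) (q x' t')) x t
      = (-I * (a:ℂ)) * ((c:ℂ) * Complex.exp (-I * ((a:ℂ) * (x:ℂ) + (b:ℂ) * (t:ℂ)))) := by
    have e : (fun x' : ℝ => (starRingEnd ℂ) (q x' t))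
        = fun x' : ℝ => (c:ℂ) * Complex.exp (-I * ((a:ℂ) * (x':ℂ) + (b:ℂ) * (t:ℂ))) :=
      funext fun y => hqcAll y t
    show deriv (fun x' => (starRingEnd ℂ) (q x' t)) x = _
    rw [e, (hasDerivAt_qexp (c:ℂ) (-I) a b t x).deriv]
  have hpxrc : pX (fun x' t' => (starRingEnd ℂ) (r x' t')) x t
      = (-I * (a:ℂ)) * (-(I * (d:ℂ)) * Complex.exp (-I * ((a:ℂ) * (x:ℂ) + (b:ℂ) * (t:ℂ)))) := by
    have e : (fun x' : ℝ => (starRingEnd ℂ) (r x' t))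
        = fun x' : ℝ => -(I * (d:ℂ)) * Complex.exp (-I * ((a:ℂ) * (x':ℂ) + (b:ℂ) * (t:ℂ))) :=
      funext fun y => hrcAll y t
    show deriv (fun x' => (starRingEnd ℂ) (r x' t)) x = _
    rw [e, (hasDerivAt_qexp (-(I * (d:ℂ))) (-I) a b t x).deriv]
  refine ⟨(hasDerivAt_xexp n1 S (μ - (a:ℂ) / 2) I a b t x).congr_deriv ?_,
    (hasDerivAt_xexp k1 S (μ - (a:ℂ) / 2) I a b t x).congr_deriv ?_,
    (hasDerivAt_xexp (((a:ℂ) * I + 2 * I * μ + S) * n1 / (2 * (c:ℂ))) S (μ - (a:ℂ) / 2) (-I) a b t x).congr_deriv ?_,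
    (hasDerivAt_xexp ((((a:ℂ) * (c:ℂ) * I + 2 * (c:ℂ) * I * μ + S * (c:ℂ)) * k1
      + ((a:ℂ) * (d:ℂ) + 2 * (d:ℂ) * μ - I * S * (d:ℂ)) * n1) / (2 * (c:ℂ) ^ 2)) S (μ - (a:ℂ) / 2) (-I) a b t x).congr_deriv ?_,
    (hasDerivAt_texp n1 S (μ - (a:ℂ) / 2) I a b x t).congr_deriv ?_,
    (hasDerivAt_texp k1 S (μ - (a:ℂ) / 2) I a b x t).congr_deriv ?_,
    (hasDerivAt_texp (((a:ℂ) * I + 2 * I * μ + S) * n1 / (2 * (c:ℂ))) S (μ - (a:ℂ) / 2) (-I) a b x t).congr_deriv ?_,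
    (hasDerivAt_texp ((((a:ℂ) * (c:ℂ) * I + 2 * (c:ℂ) * I * μ + S * (c:ℂ)) * k1
      + ((a:ℂ) * (d:ℂ) + 2 * (d:ℂ) * μ - I * S * (d:ℂ)) * n1) / (2 * (c:ℂ) ^ 2)) S (μ - (a:ℂ) / 2) (-I) a b x t).congr_deriv ?_⟩
  · try simp only [hpxqc, hpxrc, hqc, hrc]
    try simp only [hq, hr, hpxq, hpxr]
    set A := Complex.exp (I * ((a:ℂ) * (x:ℂ) + (b:ℂ) * (t:ℂ)) / 2 + S * ((x:ℂ) / 2 + (μ - (a:ℂ) / 2) * (t:ℂ))) with hAdef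
    set B := Complex.exp (-I * ((a:ℂ) * (x:ℂ) + (b:ℂ) * (t:ℂ)) / 2 + S * ((x:ℂ) / 2 + (μ - (a:ℂ) / 2) * (t:ℂ))) with hBdef
    set E := Complex.exp (I * ((a:ℂ) * (x:ℂ) + (b:ℂ) * (t:ℂ))) with hEdef
    set F := Complex.exp (-I * ((a:ℂ) * (x:ℂ) + (b:ℂ) * (t:ℂ))) with hFdef
    set c1 := ((a:ℂ) * I + 2 * I * μ + S) * n1 / (2 * (c:ℂ)) with hc1def
    set c2 := (((a:ℂ) * (c:ℂ) * I + 2 * (c:ℂ) * I * μ + S * (c:ℂ)) * k1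
      + ((a:ℂ) * (d:ℂ) + 2 * (d:ℂ) * μ - I * S * (d:ℂ)) * n1) / (2 * (c:ℂ) ^ 2) with hc2def
    have hEB : E * B = A := by
      rw [hAdef, hBdef, hEdef, ← Complex.exp_add]
      exact congrArg Complex.exp (by ring)
    have hEF : E * F = 1 := by
      rw [hEdef, hFdef, ← Complex.exp_add,
        show I * ((a:ℂ) * (x:ℂ) + (b:ℂ) * (t:ℂ)) + -I * ((a:ℂ) * (x:ℂ) + (b:ℂ) * (t:ℂ)) = 0 from by ring,
        Complex.exp_zero]
    have hC1 : 2 * (c:ℂ) * c1 = ((a:ℂ) * I + 2 * I * μ + S) * n1 := by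
      rw [hc1def]; field_simp
    have hC2 : 2 * (c:ℂ) ^ 2 * c2 = ((a:ℂ) * (c:ℂ) * I + 2 * (c:ℂ) * I * μ + S * (c:ℂ)) * k1
        + ((a:ℂ) * (d:ℂ) + 2 * (d:ℂ) * μ - I * S * (d:ℂ)) * n1 := by
      rw [hc2def]; field_simp
    apply mul_left_cancel₀ h2c2
    linear_combination (((-1)*(c:ℂ)^2*S*n1 + (-2)*I*(c:ℂ)^2*μ*n1 + (-1)*I*(a:ℂ)*(c:ℂ)^2*n1)) * hEB + (((-1)*(c:ℂ)^2*B*E)) * hC1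
  · try simp only [hpxqc, hpxrc, hqc, hrc]
    try simp only [hq, hr, hpxq, hpxr]
    set A := Complex.exp (I * ((a:ℂ) * (x:ℂ) + (b:ℂ) * (t:ℂ)) / 2 + S * ((x:ℂ) / 2 + (μ - (a:ℂ) / 2) * (t:ℂ))) with hAdef
    set B := Complex.exp (-I * ((a:ℂ) * (x:ℂ) + (b:ℂ) * (t:ℂ)) / 2 + S * ((x:ℂ) / 2 + (μ - (a:ℂ) / 2) * (t:ℂ))) with hBdef
    set E := Complex.exp (I * ((a:ℂ) * (x:ℂ) + (b:ℂ) * (t:ℂ))) with hEdef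
    set F := Complex.exp (-I * ((a:ℂ) * (x:ℂ) + (b:ℂ) * (t:ℂ))) with hFdef
    set c1 := ((a:ℂ) * I + 2 * I * μ + S) * n1 / (2 * (c:ℂ)) with hc1def
    set c2 := (((a:ℂ) * (c:ℂ) * I + 2 * (c:ℂ) * I * μ + S * (c:ℂ)) * k1
      + ((a:ℂ) * (d:ℂ) + 2 * (d:ℂ) * μ - I * S * (d:ℂ)) * n1) / (2 * (c:ℂ) ^ 2) with hc2def
    have hEB : E * B = A := by
      rw [hAdef, hBdef, hEdef, ← Complex.exp_add]
      exact congrArg Complex.exp (by ring)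
    have hEF : E * F = 1 := by
      rw [hEdef, hFdef, ← Complex.exp_add,
        show I * ((a:ℂ) * (x:ℂ) + (b:ℂ) * (t:ℂ)) + -I * ((a:ℂ) * (x:ℂ) + (b:ℂ) * (t:ℂ)) = 0 from by ring,
        Complex.exp_zero]
    have hC1 : 2 * (c:ℂ) * c1 = ((a:ℂ) * I + 2 * I * μ + S) * n1 := by
      rw [hc1def]; field_simp
    have hC2 : 2 * (c:ℂ) ^ 2 * c2 = ((a:ℂ) * (c:ℂ) * I + 2 * (c:ℂ) * I * μ + S * (c:ℂ)) * k1
        + ((a:ℂ) * (d:ℂ) + 2 * (d:ℂ) * μ - I * S * (d:ℂ)) * n1 := by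
      rw [hc2def]; field_simp
    apply mul_left_cancel₀ h2c2
    linear_combination (((-1)*(c:ℂ)^2*S*k1 + (-2)*I*(c:ℂ)^2*μ*k1 + (-1)*I*(a:ℂ)*(c:ℂ)^2*k1)) * hEB + (((-1)*I*(c:ℂ)*(d:ℂ)*B*E)) * hC1 + (((-1)*(c:ℂ)*B*E)) * hC2 + (((-2)*(c:ℂ)*(d:ℂ)*μ*n1*B*E + (-1)*(a:ℂ)*(c:ℂ)*(d:ℂ)*n1*B*E)) * Complex.I_sq
  · try simp only [hpxqc, hpxrc, hqc, hrc]
    try simp only [hq, hr, hpxq, hpxr]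
    set A := Complex.exp (I * ((a:ℂ) * (x:ℂ) + (b:ℂ) * (t:ℂ)) / 2 + S * ((x:ℂ) / 2 + (μ - (a:ℂ) / 2) * (t:ℂ))) with hAdef
    set B := Complex.exp (-I * ((a:ℂ) * (x:ℂ) + (b:ℂ) * (t:ℂ)) / 2 + S * ((x:ℂ) / 2 + (μ - (a:ℂ) / 2) * (t:ℂ))) with hBdef
    set E := Complex.exp (I * ((a:ℂ) * (x:ℂ) + (b:ℂ) * (t:ℂ))) with hEdef
    set F := Complex.exp (-I * ((a:ℂ) * (x:ℂ) + (b:ℂ) * (t:ℂ))) with hFdef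
    set c1 := ((a:ℂ) * I + 2 * I * μ + S) * n1 / (2 * (c:ℂ)) with hc1def
    set c2 := (((a:ℂ) * (c:ℂ) * I + 2 * (c:ℂ) * I * μ + S * (c:ℂ)) * k1
      + ((a:ℂ) * (d:ℂ) + 2 * (d:ℂ) * μ - I * S * (d:ℂ)) * n1) / (2 * (c:ℂ) ^ 2) with hc2def
    have hEB : E * B = A := by
      rw [hAdef, hBdef, hEdef, ← Complex.exp_add]
      exact congrArg Complex.exp (by ring)
    have hEF : E * F = 1 := by
      rw [hEdef, hFdef, ← Complex.exp_add,
        show I * ((a:ℂ) * (x:ℂ) + (b:ℂ) * (t:ℂ)) + -I * ((a:ℂ) * (x:ℂ) + (b:ℂ) * (t:ℂ)) = 0 from by ring,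
        Complex.exp_zero]
    have hC1 : 2 * (c:ℂ) * c1 = ((a:ℂ) * I + 2 * I * μ + S) * n1 := by
      rw [hc1def]; field_simp
    have hC2 : 2 * (c:ℂ) ^ 2 * c2 = ((a:ℂ) * (c:ℂ) * I + 2 * (c:ℂ) * I * μ + S * (c:ℂ)) * k1
        + ((a:ℂ) * (d:ℂ) + 2 * (d:ℂ) * μ - I * S * (d:ℂ)) * n1 := by
      rw [hc2def]; field_simp
    apply mul_left_cancel₀ h2c2
    linear_combination (((-2)*(c:ℂ)^3*n1*F)) * hEB + (((2)*(c:ℂ)^3*n1*B)) * hEF + (((1/2)*(c:ℂ)*S*B + (-1)*I*(c:ℂ)*μ*B + (-1/2)*I*(a:ℂ)*(c:ℂ)*B)) * hC1 + (((1/2)*(c:ℂ)*n1*B)) * hS + (((-2)*(c:ℂ)*μ^2*n1*B + (-2)*(a:ℂ)*(c:ℂ)*μ*n1*B + (-1/2)*(a:ℂ)^2*(c:ℂ)*n1*B)) * Complex.I_sq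
  · try simp only [hpxqc, hpxrc, hqc, hrc]
    try simp only [hq, hr, hpxq, hpxr]
    set A := Complex.exp (I * ((a:ℂ) * (x:ℂ) + (b:ℂ) * (t:ℂ)) / 2 + S * ((x:ℂ) / 2 + (μ - (a:ℂ) / 2) * (t:ℂ))) with hAdef
    set B := Complex.exp (-I * ((a:ℂ) * (x:ℂ) + (b:ℂ) * (t:ℂ)) / 2 + S * ((x:ℂ) / 2 + (μ - (a:ℂ) / 2) * (t:ℂ))) with hBdef
    set E := Complex.exp (I * ((a:ℂ) * (x:ℂ) + (b:ℂ) * (t:ℂ))) with hEdef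
    set F := Complex.exp (-I * ((a:ℂ) * (x:ℂ) + (b:ℂ) * (t:ℂ))) with hFdef
    set c1 := ((a:ℂ) * I + 2 * I * μ + S) * n1 / (2 * (c:ℂ)) with hc1def
    set c2 := (((a:ℂ) * (c:ℂ) * I + 2 * (c:ℂ) * I * μ + S * (c:ℂ)) * k1
      + ((a:ℂ) * (d:ℂ) + 2 * (d:ℂ) * μ - I * S * (d:ℂ)) * n1) / (2 * (c:ℂ) ^ 2) with hc2def
    have hEB : E * B = A := by
      rw [hAdef, hBdef, hEdef, ← Complex.exp_add]
      exact congrArg Complex.exp (by ring)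
    have hEF : E * F = 1 := by
      rw [hEdef, hFdef, ← Complex.exp_add,
        show I * ((a:ℂ) * (x:ℂ) + (b:ℂ) * (t:ℂ)) + -I * ((a:ℂ) * (x:ℂ) + (b:ℂ) * (t:ℂ)) = 0 from by ring,
        Complex.exp_zero]
    have hC1 : 2 * (c:ℂ) * c1 = ((a:ℂ) * I + 2 * I * μ + S) * n1 := by
      rw [hc1def]; field_simp
    have hC2 : 2 * (c:ℂ) ^ 2 * c2 = ((a:ℂ) * (c:ℂ) * I + 2 * (c:ℂ) * I * μ + S * (c:ℂ)) * k1
        + ((a:ℂ) * (d:ℂ) + 2 * (d:ℂ) * μ - I * S * (d:ℂ)) * n1 := by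
      rw [hc2def]; field_simp
    apply mul_left_cancel₀ h2c2
    linear_combination (((-2)*(c:ℂ)^3*k1*F + (2)*I*(c:ℂ)^2*(d:ℂ)*n1*F)) * hEB + (((2)*(c:ℂ)^3*k1*B + (-2)*I*(c:ℂ)^2*(d:ℂ)*n1*B)) * hEF + (((1/2)*S*B + (-1)*I*μ*B + (-1/2)*I*(a:ℂ)*B)) * hC2 + (((1/2)*(c:ℂ)*k1*B + (-1/2)*I*(d:ℂ)*n1*B)) * hS + (((1)*(d:ℂ)*μ*S*n1*B + (-2)*(c:ℂ)*μ^2*k1*B + (1/2)*(a:ℂ)*(d:ℂ)*S*n1*B + (-2)*(a:ℂ)*(c:ℂ)*μ*k1*B + (-1/2)*(a:ℂ)^2*(c:ℂ)*k1*B)) * Complex.I_sq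
  · try simp only [hpxqc, hpxrc, hqc, hrc]
    try simp only [hq, hr, hpxq, hpxr]
    set A := Complex.exp (I * ((a:ℂ) * (x:ℂ) + (b:ℂ) * (t:ℂ)) / 2 + S * ((x:ℂ) / 2 + (μ - (a:ℂ) / 2) * (t:ℂ))) with hAdef
    set B := Complex.exp (-I * ((a:ℂ) * (x:ℂ) + (b:ℂ) * (t:ℂ)) / 2 + S * ((x:ℂ) / 2 + (μ - (a:ℂ) / 2) * (t:ℂ))) with hBdef
    set E := Complex.exp (I * ((a:ℂ) * (x:ℂ) + (b:ℂ) * (t:ℂ))) with hEdef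
    set F := Complex.exp (-I * ((a:ℂ) * (x:ℂ) + (b:ℂ) * (t:ℂ))) with hFdef
    set c1 := ((a:ℂ) * I + 2 * I * μ + S) * n1 / (2 * (c:ℂ)) with hc1def
    set c2 := (((a:ℂ) * (c:ℂ) * I + 2 * (c:ℂ) * I * μ + S * (c:ℂ)) * k1
      + ((a:ℂ) * (d:ℂ) + 2 * (d:ℂ) * μ - I * S * (d:ℂ)) * n1) / (2 * (c:ℂ) ^ 2) with hc2def
    have hEB : E * B = A := by
      rw [hAdef, hBdef, hEdef, ← Complex.exp_add]
      exact congrArg Complex.exp (by ring)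
    have hEF : E * F = 1 := by
      rw [hEdef, hFdef, ← Complex.exp_add,
        show I * ((a:ℂ) * (x:ℂ) + (b:ℂ) * (t:ℂ)) + -I * ((a:ℂ) * (x:ℂ) + (b:ℂ) * (t:ℂ)) = 0 from by ring,
        Complex.exp_zero]
    have hC1 : 2 * (c:ℂ) * c1 = ((a:ℂ) * I + 2 * I * μ + S) * n1 := by
      rw [hc1def]; field_simp
    have hC2 : 2 * (c:ℂ) ^ 2 * c2 = ((a:ℂ) * (c:ℂ) * I + 2 * (c:ℂ) * I * μ + S * (c:ℂ)) * k1
        + ((a:ℂ) * (d:ℂ) + 2 * (d:ℂ) * μ - I * S * (d:ℂ)) * n1 := by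
      rw [hc2def]; field_simp
    apply mul_left_cancel₀ h2c2
    linear_combination (((1)*I*(c:ℂ)^2*n1*A)) * hbC + (((-2)*(c:ℂ)^2*μ*S*n1 + (1)*(a:ℂ)*(c:ℂ)^2*S*n1 + (-4)*I*(c:ℂ)^2*μ^2*n1 + (-2)*I*(c:ℂ)^4*n1 + (2)*I*(c:ℂ)^4*n1*E*F + (1)*I*(a:ℂ)^2*(c:ℂ)^2*n1)) * hEB + (((-2)*I*(c:ℂ)^4*n1*B*E)) * hEF + (((-2)*(c:ℂ)^2*μ*B*E + (-1)*I^2*(a:ℂ)*(c:ℂ)^2*B*E)) * hC1 + (((-1)*(a:ℂ)*(c:ℂ)^2*S*n1*B*E + (-2)*I*(a:ℂ)*(c:ℂ)^2*μ*n1*B*E + (-1)*I*(a:ℂ)^2*(c:ℂ)^2*n1*B*E)) * Complex.I_sq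
  · try simp only [hpxqc, hpxrc, hqc, hrc]
    try simp only [hq, hr, hpxq, hpxr]
    set A := Complex.exp (I * ((a:ℂ) * (x:ℂ) + (b:ℂ) * (t:ℂ)) / 2 + S * ((x:ℂ) / 2 + (μ - (a:ℂ) / 2) * (t:ℂ))) with hAdef
    set B := Complex.exp (-I * ((a:ℂ) * (x:ℂ) + (b:ℂ) * (t:ℂ)) / 2 + S * ((x:ℂ) / 2 + (μ - (a:ℂ) / 2) * (t:ℂ))) with hBdef
    set E := Complex.exp (I * ((a:ℂ) * (x:ℂ) + (b:ℂ) * (t:ℂ))) with hEdef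
    set F := Complex.exp (-I * ((a:ℂ) * (x:ℂ) + (b:ℂ) * (t:ℂ))) with hFdef
    set c1 := ((a:ℂ) * I + 2 * I * μ + S) * n1 / (2 * (c:ℂ)) with hc1def
    set c2 := (((a:ℂ) * (c:ℂ) * I + 2 * (c:ℂ) * I * μ + S * (c:ℂ)) * k1
      + ((a:ℂ) * (d:ℂ) + 2 * (d:ℂ) * μ - I * S * (d:ℂ)) * n1) / (2 * (c:ℂ) ^ 2) with hc2def
    have hEB : E * B = A := by
      rw [hAdef, hBdef, hEdef, ← Complex.exp_add]
      exact congrArg Complex.exp (by ring)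
    have hEF : E * F = 1 := by
      rw [hEdef, hFdef, ← Complex.exp_add,
        show I * ((a:ℂ) * (x:ℂ) + (b:ℂ) * (t:ℂ)) + -I * ((a:ℂ) * (x:ℂ) + (b:ℂ) * (t:ℂ)) = 0 from by ring,
        Complex.exp_zero]
    have hC1 : 2 * (c:ℂ) * c1 = ((a:ℂ) * I + 2 * I * μ + S) * n1 := by
      rw [hc1def]; field_simp
    have hC2 : 2 * (c:ℂ) ^ 2 * c2 = ((a:ℂ) * (c:ℂ) * I + 2 * (c:ℂ) * I * μ + S * (c:ℂ)) * k1
        + ((a:ℂ) * (d:ℂ) + 2 * (d:ℂ) * μ - I * S * (d:ℂ)) * n1 := by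
      rw [hc2def]; field_simp
    apply mul_left_cancel₀ h2c2
    linear_combination (((1)*I*(c:ℂ)^2*k1*A)) * hbC + (((-2)*(c:ℂ)^2*μ*S*k1 + (1)*(a:ℂ)*(c:ℂ)^2*S*k1 + (-4)*I*(c:ℂ)^2*μ^2*k1 + (-2)*I*(c:ℂ)^4*k1 + (2)*I*(c:ℂ)^4*k1*E*F + (1)*I*(a:ℂ)^2*(c:ℂ)^2*k1)) * hEB + (((-2)*I*(c:ℂ)^4*k1*B*E)) * hEF + (((-2)*I*(c:ℂ)*(d:ℂ)*μ*B*E + (-1)*I^3*(a:ℂ)*(c:ℂ)*(d:ℂ)*B*E)) * hC1 + (((-2)*(c:ℂ)*μ*B*E + (-1)*I^2*(a:ℂ)*(c:ℂ)*B*E)) * hC2 + (((-4)*(c:ℂ)*(d:ℂ)*μ^2*n1*B*E + (-2)*(a:ℂ)*(c:ℂ)*(d:ℂ)*μ*n1*B*E + (-1)*(a:ℂ)*(c:ℂ)^2*S*k1*B*E + (-2)*I*(a:ℂ)*(c:ℂ)^2*μ*k1*B*E + (-1)*I*(a:ℂ)^2*(c:ℂ)^2*k1*B*E + (-2)*I^2*(a:ℂ)*(c:ℂ)*(d:ℂ)*μ*n1*B*E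 + (-1)*I^2*(a:ℂ)^2*(c:ℂ)*(d:ℂ)*n1*B*E)) * Complex.I_sq
  · try simp only [hpxqc, hpxrc, hqc, hrc]
    try simp only [hq, hr, hpxq, hpxr]
    set A := Complex.exp (I * ((a:ℂ) * (x:ℂ) + (b:ℂ) * (t:ℂ)) / 2 + S * ((x:ℂ) / 2 + (μ - (a:ℂ) / 2) * (t:ℂ))) with hAdef
    set B := Complex.exp (-I * ((a:ℂ) * (x:ℂ) + (b:ℂ) * (t:ℂ)) / 2 + S * ((x:ℂ) / 2 + (μ - (a:ℂ) / 2) * (t:ℂ))) with hBdef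
    set E := Complex.exp (I * ((a:ℂ) * (x:ℂ) + (b:ℂ) * (t:ℂ))) with hEdef
    set F := Complex.exp (-I * ((a:ℂ) * (x:ℂ) + (b:ℂ) * (t:ℂ))) with hFdef
    set c1 := ((a:ℂ) * I + 2 * I * μ + S) * n1 / (2 * (c:ℂ)) with hc1def
    set c2 := (((a:ℂ) * (c:ℂ) * I + 2 * (c:ℂ) * I * μ + S * (c:ℂ)) * k1
      + ((a:ℂ) * (d:ℂ) + 2 * (d:ℂ) * μ - I * S * (d:ℂ)) * n1) / (2 * (c:ℂ) ^ 2) with hc2def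
    have hEB : E * B = A := by
      rw [hAdef, hBdef, hEdef, ← Complex.exp_add]
      exact congrArg Complex.exp (by ring)
    have hEF : E * F = 1 := by
      rw [hEdef, hFdef, ← Complex.exp_add,
        show I * ((a:ℂ) * (x:ℂ) + (b:ℂ) * (t:ℂ)) + -I * ((a:ℂ) * (x:ℂ) + (b:ℂ) * (t:ℂ)) = 0 from by ring,
        Complex.exp_zero]
    have hC1 : 2 * (c:ℂ) * c1 = ((a:ℂ) * I + 2 * I * μ + S) * n1 := by
      rw [hc1def]; field_simp
    have hC2 : 2 * (c:ℂ) ^ 2 * c2 = ((a:ℂ) * (c:ℂ) * I + 2 * (c:ℂ) * I * μ + S * (c:ℂ)) * k1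
        + ((a:ℂ) * (d:ℂ) + 2 * (d:ℂ) * μ - I * S * (d:ℂ)) * n1 := by
      rw [hc2def]; field_simp
    apply mul_left_cancel₀ h2c2
    linear_combination (((-1)*I*(c:ℂ)^2*B*c1)) * hbC + (((-4)*(c:ℂ)^3*μ*n1*F + (-2)*I^2*(a:ℂ)*(c:ℂ)^3*n1*F)) * hEB + (((4)*(c:ℂ)^3*μ*n1*B + (2)*I*(c:ℂ)^4*B*c1 + (2)*I^2*(a:ℂ)*(c:ℂ)^3*n1*B)) * hEF + (((1)*(c:ℂ)*μ*S*B + (-1/2)*(a:ℂ)*(c:ℂ)*S*B + (-2)*I*(c:ℂ)*μ^2*B + (1/2)*I*(a:ℂ)^2*(c:ℂ)*B)) * hC1 + (((1)*(c:ℂ)*μ*n1*B + (-1/2)*(a:ℂ)*(c:ℂ)*n1*B)) * hS + (((-4)*(c:ℂ)*μ^3*n1*B + (-2)*(a:ℂ)*(c:ℂ)*μ^2*n1*B + (2)*(a:ℂ)*(c:ℂ)^3*n1*B + (1)*(a:ℂ)^2*(c:ℂ)*μ*n1*B + (1/2)*(a:ℂ)^3*(c:ℂ)*n1*B)) * Co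mplex.I_sq
  · try simp only [hpxqc, hpxrc, hqc, hrc]
    try simp only [hq, hr, hpxq, hpxr]
    set A := Complex.exp (I * ((a:ℂ) * (x:ℂ) + (b:ℂ) * (t:ℂ)) / 2 + S * ((x:ℂ) / 2 + (μ - (a:ℂ) / 2) * (t:ℂ))) with hAdef
    set B := Complex.exp (-I * ((a:ℂ) * (x:ℂ) + (b:ℂ) * (t:ℂ)) / 2 + S * ((x:ℂ) / 2 + (μ - (a:ℂ) / 2) * (t:ℂ))) with hBdef
    set E := Complex.exp (I * ((a:ℂ) * (x:ℂ) + (b:ℂ) * (t:ℂ))) with hEdef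
    set F := Complex.exp (-I * ((a:ℂ) * (x:ℂ) + (b:ℂ) * (t:ℂ))) with hFdef
    set c1 := ((a:ℂ) * I + 2 * I * μ + S) * n1 / (2 * (c:ℂ)) with hc1def
    set c2 := (((a:ℂ) * (c:ℂ) * I + 2 * (c:ℂ) * I * μ + S * (c:ℂ)) * k1
      + ((a:ℂ) * (d:ℂ) + 2 * (d:ℂ) * μ - I * S * (d:ℂ)) * n1) / (2 * (c:ℂ) ^ 2) with hc2def
    have hEB : E * B = A := by
      rw [hAdef, hBdef, hEdef, ← Complex.exp_add]
      exact congrArg Complex.exp (by ring)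
    have hEF : E * F = 1 := by
      rw [hEdef, hFdef, ← Complex.exp_add,
        show I * ((a:ℂ) * (x:ℂ) + (b:ℂ) * (t:ℂ)) + -I * ((a:ℂ) * (x:ℂ) + (b:ℂ) * (t:ℂ)) = 0 from by ring,
        Complex.exp_zero]
    have hC1 : 2 * (c:ℂ) * c1 = ((a:ℂ) * I + 2 * I * μ + S) * n1 := by
      rw [hc1def]; field_simp
    have hC2 : 2 * (c:ℂ) ^ 2 * c2 = ((a:ℂ) * (c:ℂ) * I + 2 * (c:ℂ) * I * μ + S * (c:ℂ)) * k1
        + ((a:ℂ) * (d:ℂ) + 2 * (d:ℂ) * μ - I * S * (d:ℂ)) * n1 := by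
      rw [hc2def]; field_simp
    apply mul_left_cancel₀ h2c2
    linear_combination (((-1)*I*(c:ℂ)^2*B*c2)) * hbC + (((-4)*(c:ℂ)^3*μ*k1*F + (4)*I*(c:ℂ)^2*(d:ℂ)*μ*n1*F + (-2)*I^2*(a:ℂ)*(c:ℂ)^3*k1*F + (2)*I^3*(a:ℂ)*(c:ℂ)^2*(d:ℂ)*n1*F)) * hEB + (((4)*(c:ℂ)^3*μ*k1*B + (-4)*I*(c:ℂ)^2*(d:ℂ)*μ*n1*B + (2)*I*(c:ℂ)^4*B*c2 + (2)*I^2*(a:ℂ)*(c:ℂ)^3*k1*B + (-2)*I^3*(a:ℂ)*(c:ℂ)^2*(d:ℂ)*n1*B)) * hEF + (((1)*μ*S*B + (-1/2)*(a:ℂ)*S*B + (-2)*I*μ^2*B + (1/2)*I*(a:ℂ)^2*B)) * hC2 + (((1)*(c:ℂ)*μ*k1*B + (-1/2)*(a:ℂ)*(c:ℂ)*k1*B + (-1)*I*(d:ℂ)*μ*n1*B + (1/2)*I*(a:ℂ)*(d:ℂ)*n1*B)) * hS + (((2)*(d:ℂ)*μ^2*S*n1*B + (-4)*(c:ℂ)*μ^3*k1*B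 + (-2)*(a:ℂ)*(c:ℂ)*μ^2*k1*B + (2)*(a:ℂ)*(c:ℂ)^3*k1*B + (-1/2)*(a:ℂ)^2*(d:ℂ)*S*n1*B + (1)*(a:ℂ)^2*(c:ℂ)*μ*k1*B + (1/2)*(a:ℂ)^3*(c:ℂ)*k1*B + (-2)*I*(a:ℂ)*(c:ℂ)^2*(d:ℂ)*n1*B)) * Complex.I_sq

/-- the superposition of the explicit eigenfunctions at `(±R, λ₁)` together
with the conjugated eigenfunctions at `(±conj R, conj λ₁)` solves the Lax system of the
Frobenius NLS equation at spectral parameter `λ₁` for the periodic seed potentials. -/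
theorem statement12 (a c d : ℝ) (hc : c ≠ 0) (b : ℝ) (hb : b = 2 * c ^ 2 - a ^ 2)
    (ρ : ℝ → ℝ → ℝ) (hρ : ∀ x t : ℝ, ρ x t = a * x + b * t)
    (q r : ℝ → ℝ → ℂ)
    (hq : ∀ x t : ℝ, q x t = (c : ℂ) * Complex.exp (I * (ρ x t : ℂ)))
    (hr : ∀ x t : ℝ, r x t = I * (d : ℂ) * Complex.exp (I * (ρ x t : ℂ)))
    (lam1 R n1 k1 : ℂ)
    (hR : R ^ 2 = -(a : ℂ) ^ 2 - 4 * (a : ℂ) * lam1 - 4 * (c : ℂ) ^ 2 - 4 * lam1 ^ 2)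
    (ψ110 ψ111 ψ120 ψ121 : ℂ → ℂ → ℝ → ℝ → ℂ)
    (h110 : ∀ (S μ : ℂ) (x t : ℝ), ψ110 S μ x t =
      n1 * Complex.exp (I * (ρ x t : ℂ) / 2 + S * ((x : ℂ) / 2 + (μ - (a : ℂ) / 2) * (t : ℂ))))
    (h111 : ∀ (S μ : ℂ) (x t : ℝ), ψ111 S μ x t =
      k1 * Complex.exp (I * (ρ x t : ℂ) / 2 + S * ((x : ℂ) / 2 + (μ - (a : ℂ) / 2) * (t : ℂ))))
    (h120 : ∀ (S μ : ℂ) (x t : ℝ), ψ120 S μ x t =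
      (((a : ℂ) * I + 2 * I * μ + S) * n1 / (2 * (c : ℂ)))
        * Complex.exp (-(I * (ρ x t : ℂ)) / 2 + S * ((x : ℂ) / 2 + (μ - (a : ℂ) / 2) * (t : ℂ))))
    (h121 : ∀ (S μ : ℂ) (x t : ℝ), ψ121 S μ x t =
      ((((a : ℂ) * (c : ℂ) * I + 2 * (c : ℂ) * I * μ + S * (c : ℂ)) * k1
          + ((a : ℂ) * (d : ℂ) + 2 * (d : ℂ) * μ - I * S * (d : ℂ)) * n1) / (2 * (c : ℂ) ^ 2))
        * Complex.exp (-(I * (ρ x t : ℂ)) / 2 + S * ((x : ℂ) / 2 + (μ - (a : ℂ) / 2) * (t : ℂ))))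
    (φ110 φ111 φ120 φ121 : ℝ → ℝ → ℂ)
    (hφ110 : ∀ x t : ℝ, φ110 x t =
      ψ110 R lam1 x t + ψ110 (-R) lam1 x t
        - (starRingEnd ℂ) (ψ120 ((starRingEnd ℂ) R) ((starRingEnd ℂ) lam1) x t)
        - (starRingEnd ℂ) (ψ120 (-(starRingEnd ℂ) R) ((starRingEnd ℂ) lam1) x t))
    (hφ111 : ∀ x t : ℝ, φ111 x t =
      ψ111 R lam1 x t + ψ111 (-R) lam1 x t
        - (starRingEnd ℂ) (ψ121 ((starRingEnd ℂ) R) ((starRingEnd ℂ) lam1) x t)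
        - (starRingEnd ℂ) (ψ121 (-(starRingEnd ℂ) R) ((starRingEnd ℂ) lam1) x t))
    (hφ120 : ∀ x t : ℝ, φ120 x t =
      ψ120 R lam1 x t + ψ120 (-R) lam1 x t
        + (starRingEnd ℂ) (ψ110 ((starRingEnd ℂ) R) ((starRingEnd ℂ) lam1) x t)
        + (starRingEnd ℂ) (ψ110 (-(starRingEnd ℂ) R) ((starRingEnd ℂ) lam1) x t))
    (hφ121 : ∀ x t : ℝ, φ121 x t =
      ψ121 R lam1 x t + ψ121 (-R) lam1 x t
        + (starRingEnd ℂ) (ψ111 ((starRingEnd ℂ) R) ((starRingEnd ℂ) lam1) x t)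
        + (starRingEnd ℂ) (ψ111 (-(starRingEnd ℂ) R) ((starRingEnd ℂ) lam1) x t)) :
    FrobeniusLaxSolution q r lam1 φ110 φ111 φ120 φ121 := by
  have hcC : (c:ℂ) ≠ 0 := Complex.ofReal_ne_zero.mpr hc
  have hq' : ∀ x t : ℝ, q x t = (c:ℂ) * Complex.exp (I * ((a:ℂ) * (x:ℂ) + (b:ℂ) * (t:ℂ))) := by
    intro x t
    rw [hq, hρ]
    exact congrArg (fun z => (c:ℂ) * Complex.exp z) (by push_cast; ring)
  have hr' : ∀ x t : ℝ, r x t = I * (d:ℂ) * Complex.exp (I * ((a:ℂ) * (x:ℂ) + (b:ℂ) * (t:ℂ))) := by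
    intro x t
    rw [hr, hρ]
    exact congrArg (fun z => I * (d:ℂ) * Complex.exp z) (by push_cast; ring)
  have hq2 : ∀ x t : ℝ, pX (fun x' t' => (starRingEnd ℂ) (q x' t')) x t = (starRingEnd ℂ) (pX q x t) := by
    intro x t
    simp only [pX, starRingEnd_apply]
    exact deriv.star
  have hr2 : ∀ x t : ℝ, pX (fun x' t' => (starRingEnd ℂ) (r x' t')) x t = (starRingEnd ℂ) (pX r x t) := by
    intro x t
    simp only [pX, starRingEnd_apply]
    exact deriv.star
  have hR2 : (-R) ^ 2 = -(a:ℂ) ^ 2 - 4 * (a:ℂ) * lam1 - 4 * (c:ℂ) ^ 2 - 4 * lam1 ^ 2 := by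
    rw [show (-R) ^ 2 = R ^ 2 from by ring]; exact hR
  have hR3 : ((starRingEnd ℂ) R) ^ 2 = -(a:ℂ) ^ 2 - 4 * (a:ℂ) * ((starRingEnd ℂ) lam1)
      - 4 * (c:ℂ) ^ 2 - 4 * ((starRingEnd ℂ) lam1) ^ 2 := by
    have h := congrArg (starRingEnd ℂ) hR
    simpa only [map_pow, map_sub, map_neg, map_mul, map_ofNat, Complex.conj_ofReal] using h
  have hR4 : (-(starRingEnd ℂ) R) ^ 2 = -(a:ℂ) ^ 2 - 4 * (a:ℂ) * ((starRingEnd ℂ) lam1)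
      - 4 * (c:ℂ) ^ 2 - 4 * ((starRingEnd ℂ) lam1) ^ 2 := by
    rw [show (-(starRingEnd ℂ) R) ^ 2 = ((starRingEnd ℂ) R) ^ 2 from by ring]; exact hR3
  have S1 := sol_base a b c d hc hb lam1 R n1 k1 hR q r hq' hr'
  have S2 := sol_base a b c d hc hb lam1 (-R) n1 k1 hR2 q r hq' hr'
  have S3 := (sol_base a b c d hc hb ((starRingEnd ℂ) lam1) ((starRingEnd ℂ) R) n1 k1 hR3 q r hq' hr').conjFlip hq2 hr2
  have S4 := (sol_base a b c d hc hb ((starRingEnd ℂ) lam1) (-(starRingEnd ℂ) R) n1 k1 hR4 q r hq' hr').conjFlip hq2 hr2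
  have ST := (S1.add S2).add (S3.add S4)
  have Hψ110 : ∀ (S' μ' : ℂ) (x t : ℝ), ψ110 S' μ' x t
      = n1 * Complex.exp (I * ((a:ℂ) * (x:ℂ) + (b:ℂ) * (t:ℂ)) / 2
        + S' * ((x:ℂ) / 2 + (μ' - (a:ℂ) / 2) * (t:ℂ))) := by
    intro S' μ' x t
    rw [h110, hρ]
    exact congrArg (fun z => n1 * Complex.exp z) (by push_cast; ring)
  have Hψ111 : ∀ (S' μ' : ℂ) (x t : ℝ), ψ111 S' μ' x t
      = k1 * Complex.exp (I * ((a:ℂ) * (x:ℂ) + (b:ℂ) * (t:ℂ)) / 2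
        + S' * ((x:ℂ) / 2 + (μ' - (a:ℂ) / 2) * (t:ℂ))) := by
    intro S' μ' x t
    rw [h111, hρ]
    exact congrArg (fun z => k1 * Complex.exp z) (by push_cast; ring)
  have Hψ120 : ∀ (S' μ' : ℂ) (x t : ℝ), ψ120 S' μ' x t
      = ((a:ℂ) * I + 2 * I * μ' + S') * n1 / (2 * (c:ℂ))
        * Complex.exp (-I * ((a:ℂ) * (x:ℂ) + (b:ℂ) * (t:ℂ)) / 2
        + S' * ((x:ℂ) / 2 + (μ' - (a:ℂ) / 2) * (t:ℂ))) := by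
    intro S' μ' x t
    rw [h120, hρ]
    exact congrArg (fun z => ((a:ℂ) * I + 2 * I * μ' + S') * n1 / (2 * (c:ℂ)) * Complex.exp z)
      (by push_cast; ring)
  have Hψ121 : ∀ (S' μ' : ℂ) (x t : ℝ), ψ121 S' μ' x t
      = (((a:ℂ) * (c:ℂ) * I + 2 * (c:ℂ) * I * μ' + S' * (c:ℂ)) * k1
          + ((a:ℂ) * (d:ℂ) + 2 * (d:ℂ) * μ' - I * S' * (d:ℂ)) * n1) / (2 * (c:ℂ) ^ 2)
        * Complex.exp (-I * ((a:ℂ) * (x:ℂ) + (b:ℂ) * (t:ℂ)) / 2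
        + S' * ((x:ℂ) / 2 + (μ' - (a:ℂ) / 2) * (t:ℂ))) := by
    intro S' μ' x t
    rw [h121, hρ]
    exact congrArg (fun z => (((a:ℂ) * (c:ℂ) * I + 2 * (c:ℂ) * I * μ' + S' * (c:ℂ)) * k1
      + ((a:ℂ) * (d:ℂ) + 2 * (d:ℂ) * μ' - I * S' * (d:ℂ)) * n1) / (2 * (c:ℂ) ^ 2) * Complex.exp z)
      (by push_cast; ring)
  refine (ST.congrFns ?_ ?_ ?_ ?_).lax
  · intro x t
    rw [hφ110, Hψ110 R lam1, Hψ110 (-R) lam1,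
      Hψ120 ((starRingEnd ℂ) R) ((starRingEnd ℂ) lam1),
      Hψ120 (-(starRingEnd ℂ) R) ((starRingEnd ℂ) lam1)]
    ring
  · intro x t
    rw [hφ111, Hψ111 R lam1, Hψ111 (-R) lam1,
      Hψ121 ((starRingEnd ℂ) R) ((starRingEnd ℂ) lam1),
      Hψ121 (-(starRingEnd ℂ) R) ((starRingEnd ℂ) lam1)]
    ring
  · intro x t
    rw [hφ120, Hψ120 R lam1, Hψ120 (-R) lam1,
      Hψ110 ((starRingEnd ℂ) R) ((starRingEnd ℂ) lam1),
      Hψ110 (-(starRingEnd ℂ) R) ((starRingEnd ℂ) lam1)]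
    ring
  · intro x t
    rw [hφ121, Hψ121 R lam1, Hψ121 (-R) lam1,
      Hψ111 ((starRingEnd ℂ) R) ((starRingEnd ℂ) lam1),
      Hψ111 (-(starRingEnd ℂ) R) ((starRingEnd ℂ) lam1)]
    ring
end
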